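/- arXiv:cs/0610093 — 8 statements merged into one kernel-verified Lean document; each statement's English description precedes it below -/
import Mathlib

section
/- For all epistemic states (M,s), all updates (U,e) and (U',e'), and every formula φ of the language L: (M,s) ⊨ [U,e][U',e']φ if and only if (M,s) ⊨ [(U,e);(U',e')]φ. Hence the axiom [U,e][U',e']φ ↔ [(U,e);(U',e')]φ is valid. -/
/-- Formulas of the language `L` of epistemic logic with updates (events of
epistemic and/or ontic change).  The constructor `upd` inlines an update
`(U,e)`: an event type `E`, accessibility relations on events, preconditions,
postconditions, and the actual event `e`.  `⊤` and `⊥` are included as the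
usual primitives. -/
inductive Form (A P : Type) : Type 1 where
  | atom : P → Form A P
  | top : Form A P
  | bot : Form A P
  | neg : Form A P → Form A P
  | and : Form A P → Form A P → Form A P
  | box : A → Form A P → Form A P
  | cbox : Set A → Form A P → Form A P
  | upd : (E : Type) → (A → E → E → Prop) → (E → Form A P) → (E → P → Form A P) →
      E → Form A P → Form A P

/-- An update model `U = (E, rel, pre, post)`. -/
structure Upd (A P : Type) : Type 1 where
  E : Type
  rel : A → E → E → Prop
  pre : E → Form A P
  post : E → P → Form A P

/-- An epistemic model `M = (S, R, V)`. -/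
structure Model (A P : Type) : Type 1 where
  S : Type
  R : A → S → S → Prop
  V : P → S → Prop

/-- The formula `[U,e]φ`. -/
def Form.updF {A P : Type} (U : Upd A P) (e : U.E) (φ : Form A P) : Form A P :=
  Form.upd U.E U.rel U.pre U.post e φ

/-- The product construction, parameterised by the satisfaction relations of the
preconditions and postconditions of the events. -/
def prodM {A P : Type} (M : Model A P) (E : Type) (rel : A → E → E → Prop)
    (preS : E → M.S → Prop) (postS : E → M.S → P → Prop) : Model A P where
  S := { x : M.S × E // preS x.2 x.1 }
  R a x y := M.R a x.1.1 y.1.1 ∧ rel a x.1.2 y.1.2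
  V p x := postS x.1.2 x.1.1 p

/-- Satisfaction: `sat φ M s` is `(M,s) ⊨ φ`. -/
def sat {A P : Type} : Form A P → (M : Model A P) → M.S → Prop
  | .atom p, M, s => M.V p s
  | .top, _, _ => True
  | .bot, _, _ => False
  | .neg φ, M, s => ¬ sat φ M s
  | .and φ ψ, M, s => sat φ M s ∧ sat ψ M s
  | .box a φ, M, s => ∀ t, M.R a s t → sat φ M t
  | .cbox B φ, M, s =>
      ∀ t, Relation.ReflTransGen (fun x y => ∃ a ∈ B, M.R a x y) s t → sat φ M t
  | .upd E rel pre post e φ, M, s =>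
      ∀ h : sat (pre e) M s,
        sat φ (prodM M E rel (fun f t => sat (pre f) M t) (fun f t p => sat (post f p) M t))
          ⟨(s, e), h⟩

/-- The product update `M ⊗ U`; its domain is `{(t,f) | (M,t) ⊨ pre(f)}`. -/
def Model.prodUpd {A P : Type} (M : Model A P) (U : Upd A P) : Model A P :=
  prodM M U.E U.rel (fun f t => sat (U.pre f) M t) (fun f t p => sat (U.post f p) M t)

/-- Well-formedness of a formula: all event sets of update models occurring in it are
finite and nonempty, and all postconditions differ from the identity `p ↦ p` on only
finitely many atoms (this finite set being the domain `dom(post(e))`). -/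
def Form.WF {A P : Type} : Form A P → Prop
  | .atom _ => True
  | .top => True
  | .bot => True
  | .neg φ => φ.WF
  | .and φ ψ => φ.WF ∧ ψ.WF
  | .box _ φ => φ.WF
  | .cbox _ φ => φ.WF
  | .upd E _ pre post _ φ =>
      Nonempty E ∧ Finite E ∧ (∀ f, (pre f).WF) ∧ (∀ f p, (post f p).WF) ∧
      (∀ f, {p | post f p ≠ Form.atom p}.Finite) ∧ φ.WF

/-- Well-formedness of an update model: the event set is finite and nonempty, the
preconditions and postconditions are well-formed formulas, and each postcondition
differs from the identity on only finitely many atoms, the set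
`{p | post e p ≠ atom p}` being the domain `dom(post(e))`. -/
def Upd.WF {A P : Type} (U : Upd A P) : Prop :=
  Nonempty U.E ∧ Finite U.E ∧ (∀ f, (U.pre f).WF) ∧ (∀ f p, (U.post f p).WF) ∧
  (∀ f, {p | U.post f p ≠ Form.atom p}.Finite)

/-- Disjunction, as the usual abbreviation. -/
def Form.or {A P : Type} (φ ψ : Form A P) : Form A P := (φ.neg.and ψ.neg).neg

/-- Implication, as the usual abbreviation. -/
def Form.imp {A P : Type} (φ ψ : Form A P) : Form A P := (φ.and ψ.neg).neg

/-- Bi-implication, as the usual abbreviation. -/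
def Form.biImp {A P : Type} (φ ψ : Form A P) : Form A P := (φ.imp ψ).and (ψ.imp φ)

/-- Finite conjunction of a list of formulas. -/
def bigAnd {A P : Type} (l : List (Form A P)) : Form A P := l.foldr Form.and Form.top

/-- Finite disjunction of a list of formulas. -/
def bigOr {A P : Type} (l : List (Form A P)) : Form A P := l.foldr Form.or Form.bot

open Classical in
/-- Composition `(U,e) ; (U',e')` of update models: the underlying update model has
events `E × E'`, `pre''(f,f') = pre(f) ∧ [U,f]pre'(f')`, and for `p ∈ dom(post''(f,f'))
= dom(post(f)) ∪ dom(post'(f'))`: `post''(f,f')(p) = post(f)(p)` if `p ∉ dom(post'(f'))`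
and `[U,f]post'(f')(p)` otherwise; the point is the pair `(e,e')`. -/
noncomputable def Upd.comp {A P : Type} (U U' : Upd A P) : Upd A P where
  E := U.E × U'.E
  rel a x y := U.rel a x.1 y.1 ∧ U'.rel a x.2 y.2
  pre x := (U.pre x.1).and (Form.updF U x.1 (U'.pre x.2))
  post x p :=
    if U'.post x.2 p = Form.atom p then U.post x.1 p
    else Form.updF U x.1 (U'.post x.2 p)


/-- A (strict) isomorphism of models along a map `g`. -/
def ModelIso {A P : Type} (M N : Model A P) (g : M.S → N.S) : Prop :=
  Function.Bijective g ∧ (∀ a s t, M.R a s t ↔ N.R a (g s) (g t)) ∧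
  (∀ p s, M.V p s ↔ N.V p (g s))

theorem rtg_iso {A P : Type} {M N : Model A P} {g : M.S → N.S}
    (h : ModelIso M N g) (B : Set A) (s t : M.S) :
    Relation.ReflTransGen (fun x y => ∃ a ∈ B, M.R a x y) s t ↔
      Relation.ReflTransGen (fun x y => ∃ a ∈ B, N.R a x y) (g s) (g t) := by
  obtain ⟨hbij, hR, _⟩ := h
  constructor
  · intro hst
    exact Relation.ReflTransGen.lift g
      (fun x y ⟨a, ha, hr⟩ => ⟨a, ha, (hR a x y).mp hr⟩) _ _ hst
  · intro hst
    let e := Equiv.ofBijective g hbij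
    have key : ∀ u v : N.S,
        Relation.ReflTransGen (fun x y => ∃ a ∈ B, N.R a x y) u v →
        Relation.ReflTransGen (fun x y => ∃ a ∈ B, M.R a x y) (e.symm u) (e.symm v) := by
      intro u v huv
      refine Relation.ReflTransGen.lift e.symm (fun x y ⟨a, ha, hr⟩ => ⟨a, ha, ?_⟩) _ _ huv
      have hx : g (e.symm x) = x := e.apply_symm_apply x
      have hy : g (e.symm y) = y := e.apply_symm_apply y
      exact (hR a _ _).mpr (by rw [hx, hy]; exact hr)
    have := key (g s) (g t) hst
    rwa [show e.symm (g s) = s from e.symm_apply_apply s,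
         show e.symm (g t) = t from e.symm_apply_apply t] at this

theorem sat_iso {A P : Type} (φ : Form A P) :
    ∀ (M N : Model A P) (g : M.S → N.S), ModelIso M N g →
      ∀ s, sat φ M s ↔ sat φ N (g s) := by
  induction φ with
  | atom p => intro M N g h s; exact h.2.2 p s
  | top => intro M N g h s; simp [sat]
  | bot => intro M N g h s; simp [sat]
  | neg φ ih => intro M N g h s; simp only [sat]; rw [ih M N g h s]
  | and φ ψ ihφ ihψ =>
      intro M N g h s; simp only [sat]; rw [ihφ M N g h s, ihψ M N g h s]
  | box a φ ih =>
      intro M N g h s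
      simp only [sat]
      constructor
      · intro H u hu
        obtain ⟨t, rfl⟩ := h.1.2 u
        exact (ih M N g h t).mp (H t ((h.2.1 a s t).mpr hu))
      · intro H t ht
        exact (ih M N g h t).mpr (H (g t) ((h.2.1 a s t).mp ht))
  | cbox B φ ih =>
      intro M N g h s
      simp only [sat]
      constructor
      · intro H u hu
        obtain ⟨t, rfl⟩ := h.1.2 u
        exact (ih M N g h t).mp (H t ((rtg_iso h B s t).mpr hu))
      · intro H t ht
        exact (ih M N g h t).mpr (H (g t) ((rtg_iso h B s t).mp ht))
  | upd E rel pre post e φ ihpre ihpost ihφ =>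
      intro M N g h s
      -- the induced iso on product models
      let MP := prodM M E rel (fun f t => sat (pre f) M t) (fun f t p => sat (post f p) M t)
      let NP := prodM N E rel (fun f t => sat (pre f) N t) (fun f t p => sat (post f p) N t)
      let g2 : MP.S → NP.S := fun x =>
        ⟨(g x.1.1, x.1.2), (ihpre x.1.2 M N g h x.1.1).mp x.2⟩
      have h2 : ModelIso MP NP g2 := by
        refine ⟨⟨?_, ?_⟩, ?_, ?_⟩
        · rintro ⟨⟨t, f⟩, ht⟩ ⟨⟨u, f'⟩, hu⟩ hxy
          have h1 : g t = g u ∧ f = f' := by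
            have := congrArg Subtype.val hxy
            exact ⟨congrArg Prod.fst this, congrArg Prod.snd this⟩
          have : t = u := h.1.1 h1.1
          subst this; cases h1.2; rfl
        · rintro ⟨⟨u, f⟩, hu⟩
          obtain ⟨t, rfl⟩ := h.1.2 u
          exact ⟨⟨(t, f), (ihpre f M N g h t).mpr hu⟩, rfl⟩
        · rintro a ⟨⟨t, f⟩, ht⟩ ⟨⟨u, f'⟩, hu⟩
          simp only [MP, NP, prodM, g2]
          rw [h.2.1 a t u]
        · rintro p ⟨⟨t, f⟩, ht⟩
          simp only [MP, NP, prodM, g2]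
          exact ihpost f p M N g h t
      simp only [sat]
      constructor
      · intro H h'
        have hp : sat (pre e) M s := (ihpre e M N g h s).mpr h'
        exact (ihφ MP NP g2 h2 ⟨(s, e), hp⟩).mp (H hp)
      · intro H hp
        exact (ihφ MP NP g2 h2 ⟨(s, e), hp⟩).mpr (H ((ihpre e M N g h s).mp hp))

/-- For all epistemic states `(M,s)`, all updates `(U,e)` and `(U',e')`,
and every formula `φ` of the language `L`:
`(M,s) ⊨ [U,e][U',e']φ` if and only if `(M,s) ⊨ [(U,e);(U',e')]φ`.
Hence the axiom `[U,e][U',e']φ ↔ [(U,e);(U',e')]φ` is valid. -/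
theorem update_composition_valid {A P : Type} [Finite A] [Countable P]
    (M : Model A P) (hMne : Nonempty M.S) (s : M.S)
    (U U' : Upd A P) (hU : U.WF) (hU' : U'.WF) (e : U.E) (e' : U'.E)
    (φ : Form A P) (hφ : φ.WF) :
    sat (Form.updF U e (Form.updF U' e' φ)) M s ↔
      sat (Form.updF (U.comp U') (e, e') φ) M s := by
  classical
  let M1 := M.prodUpd U
  let M2 := M1.prodUpd U'
  let M3 := M.prodUpd (U.comp U')
  let g3 : M2.S → M3.S := fun x =>
    ⟨(x.1.1.1.1, (x.1.1.1.2, x.1.2)), ⟨x.1.1.2, fun _ => x.2⟩⟩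
  have iso : ModelIso M2 M3 g3 := by
    refine ⟨⟨?_, ?_⟩, ?_, ?_⟩
    · rintro ⟨⟨⟨⟨t, f⟩, h1⟩, f'⟩, h2⟩ ⟨⟨⟨⟨u, g⟩, k1⟩, g'⟩, k2⟩ hxy
      have hv := congrArg Subtype.val hxy
      have ht : t = u := congrArg (fun z => z.1) hv
      have hf : f = g := congrArg (fun z => z.2.1) hv
      have hf' : f' = g' := congrArg (fun z => z.2.2) hv
      subst ht; subst hf; subst hf'; rfl
    · rintro ⟨⟨t, ⟨f, f'⟩⟩, h⟩
      exact ⟨⟨(⟨(t, f), h.1⟩, f'), h.2 h.1⟩, rfl⟩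
    · rintro a ⟨⟨⟨⟨t, f⟩, h1⟩, f'⟩, h2⟩ ⟨⟨⟨⟨u, g⟩, k1⟩, g'⟩, k2⟩
      show (M.R a t u ∧ U.rel a f g) ∧ U'.rel a f' g' ↔
        M.R a t u ∧ (U.rel a f g ∧ U'.rel a f' g')
      tauto
    · rintro p ⟨⟨⟨⟨t, f⟩, h1⟩, f'⟩, h2⟩
      show sat (U'.post f' p) M1 ⟨(t, f), h1⟩ ↔
        sat ((U.comp U').post (f, f') p) M t
      simp only [Upd.comp]
      split_ifs with hc
      · rw [hc]
        exact Iff.rfl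
      · show _ ↔ ∀ h : sat (U.pre f) M t, sat (U'.post f' p) M1 ⟨(t, f), h⟩
        exact ⟨fun H _ => H, fun H => H h1⟩
  constructor
  · intro H h
    obtain ⟨h1, h2'⟩ := h
    exact (sat_iso φ M2 M3 g3 iso ⟨(⟨(s, e), h1⟩, e'), h2' h1⟩).mp (H h1 (h2' h1))
  · intro H h1 h2
    exact (sat_iso φ M2 M3 g3 iso ⟨(⟨(s, e), h1⟩, e'), h2⟩).mpr
      (H ⟨h1, fun _ => h2⟩)
end

section
/- For every epistemic model M and all update models U and U' with composition U;U' (the update model underlying (U,e);(U',e'), which does not depend on the points), the map (t,(f,f')) ↦ ((t,f),f') is an isomorphism of epistemic models from M ⊗ (U;U') onto (M ⊗ U) ⊗ U': it is a bijection between the domains, it preserves and reflects each accessibility relation R(a), and it preserves and reflects the valuation of every atom p ∈ P. -/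
/-- For every epistemic model `M` and all update models `U` and `U'` with
composition `U;U'`, the map `(t,(f,f')) ↦ ((t,f),f')` is an isomorphism of epistemic
models from `M ⊗ (U;U')` onto `(M ⊗ U) ⊗ U'`: a bijection between the domains that
preserves and reflects each accessibility relation and the valuation of every atom. -/
theorem product_of_composition_isomorphic {A P : Type} [Finite A] [Countable P]
    (M : Model A P) (hMne : Nonempty M.S)
    (U U' : Upd A P) (hU : U.WF) (hU' : U'.WF) :
    ∃ h : (M.prodUpd (U.comp U')).S → ((M.prodUpd U).prodUpd U').S,
      (∀ x, (h x).1.1.1.1 = x.1.1 ∧ (h x).1.1.1.2 = x.1.2.1 ∧ (h x).1.2 = x.1.2.2) ∧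
      Function.Bijective h ∧
      (∀ a x y, (M.prodUpd (U.comp U')).R a x y ↔
        ((M.prodUpd U).prodUpd U').R a (h x) (h y)) ∧
      (∀ p x, (M.prodUpd (U.comp U')).V p x ↔ ((M.prodUpd U).prodUpd U').V p (h x)) := by
  classical
  refine ⟨fun x => ⟨(⟨(x.1.1, x.1.2.1), x.2.1⟩, x.1.2.2), x.2.2 x.2.1⟩,
    fun x => ⟨rfl, rfl, rfl⟩, ⟨?_, ?_⟩, ?_, ?_⟩
  · -- injective
    intro x y hh
    apply Subtype.ext
    have h1 : x.1.1 = y.1.1 := congrArg (fun z => z.1.1.1.1) hh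
    have h2 : x.1.2.1 = y.1.2.1 := congrArg (fun z => z.1.1.1.2) hh
    have h3 : x.1.2.2 = y.1.2.2 := congrArg (fun z => z.1.2) hh
    obtain ⟨⟨t, f, f'⟩, hx⟩ := x
    obtain ⟨⟨u, g, g'⟩, hy⟩ := y
    simp_all
  · -- surjective
    rintro ⟨⟨⟨⟨t, f⟩, hpre⟩, f'⟩, hpre'⟩
    have hcomp : sat ((U.comp U').pre (f, f')) M t := by
      refine ⟨hpre, fun h => ?_⟩
      have : (⟨(t, f), h⟩ : (M.prodUpd U).S) = ⟨(t, f), hpre⟩ := rfl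
      rw [this]; exact hpre'
    exact ⟨⟨(t, (f, f')), hcomp⟩, rfl⟩
  · -- relations
    rintro a ⟨⟨t, f, f'⟩, hx⟩ ⟨⟨u, g, g'⟩, hy⟩
    constructor
    · rintro ⟨hM, hU, hU'⟩; exact ⟨⟨hM, hU⟩, hU'⟩
    · rintro ⟨⟨hM, hU⟩, hU'⟩; exact ⟨hM, hU, hU'⟩
  · -- valuation
    rintro p ⟨⟨t, f, f'⟩, hx⟩
    show sat ((U.comp U').post (f, f') p) M t ↔
      sat (U'.post f' p) (M.prodUpd U) ⟨(t, f), hx.1⟩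
    unfold Upd.comp
    simp only
    split
    · rename_i heq
      rw [heq]
      exact Iff.rfl
    · constructor
      · intro hh; exact hh hx.1
      · intro hh h
        have : (⟨(t, f), h⟩ : (M.prodUpd U).S) = ⟨(t, f), hx.1⟩ := rfl
        rw [this]; exact hh
end

section
/- Let (M,s) be a finite epistemic state and let φ ∈ L be a formula that is satisfied in some finite epistemic state (M',s') over the same agents and atoms. Suppose only finitely many atoms are relevant in M or in M', suppose there is a set S^ser ⊆ S with s ∈ S^ser that is serial for every agent a whose relation in M' is nonempty, and suppose each (M,u) for u ∈ S^ser has a characteristic formula. Then there is an update (U,e) realizing φ at (M,s), i.e., (M,s) ⊨ ⟨U,e⟩φ, where ⟨U,e⟩φ abbreviates ¬[U,e]¬φ. -/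
/-- `Z` is a bisimulation between the models `M` and `M'`. -/
def Bisim {A P : Type} (M M' : Model A P) (Z : M.S → M'.S → Prop) : Prop :=
  (∃ s s', Z s s') ∧
  ∀ s s', Z s s' →
    (∀ p, M.V p s ↔ M'.V p s') ∧
    (∀ a t, M.R a s t → ∃ t', M'.R a s' t' ∧ Z t t') ∧
    (∀ a t', M'.R a s' t' → ∃ t, M.R a s t ∧ Z t t')

/-- `(M,s) ↔ (M',s')` : some bisimulation links `s` and `s'`. -/
def Bisimilar {A P : Type} (M M' : Model A P) (s : M.S) (s' : M'.S) : Prop :=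
  ∃ Z, Bisim M M' Z ∧ Z s s'

/-- An atom is relevant in a model iff its valuation is neither empty nor the
whole domain. -/
def Relevant {A P : Type} (M : Model A P) (p : P) : Prop :=
  (∃ s, M.V p s) ∧ (∃ s, ¬ M.V p s)

/-- `S0` is serial for agent `a` in `M`. -/
def SerialOn {A P : Type} (M : Model A P) (S0 : Set M.S) (a : A) : Prop :=
  ∀ t ∈ S0, ∃ u ∈ S0, M.R a t u

/-- `δ` is a characteristic formula of the epistemic state `(M,u)`: an epistemic
state satisfies `δ` iff it is bisimilar to `(M,u)`. -/
def CharFml {A P : Type} (M : Model A P) (u : M.S) (δ : Form A P) : Prop :=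
  ∀ N : Model A P, Nonempty N.S → ∀ t : N.S, (sat δ N t ↔ Bisimilar N M t u)

open Classical in
/-- The update model for arbitrary change with precondition formula `d` at every
event: events are the states of `M'` with the accessibility relations of `M'`, and
for every atom `p` relevant in `M` or in `M'` the postcondition at event `t'` is `⊤`
if `t' ∈ V'(p)` and `⊥` otherwise (the identity on all other atoms). -/
noncomputable def arbChangeP {A P : Type} (M M' : Model A P) (d : Form A P) : Upd A P where
  E := M'.S
  rel := M'.R
  pre _ := d
  post t' p :=
    if Relevant M p ∨ Relevant M' p then (if M'.V p t' then Form.top else Form.bot)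
    else Form.atom p

/-- The update model for arbitrary change whose preconditions are the disjunction
of the formulas in `ds` (the characteristic formulas `δ_(M,u)` for `u ∈ S^ser`). -/
noncomputable def arbChange {A P : Type} (M M' : Model A P) (ds : List (Form A P)) : Upd A P :=
  arbChangeP M M' (bigOr ds)


section AuxRealization

variable {A P : Type}

/-- `Δ` supports `φ`: all atoms whose truth value `φ`'s satisfaction can depend
on (through postconditions of inlined updates) lie in `Δ`. -/
def Supports (Δ : Set P) : Form A P → Prop
  | .atom p => p ∈ Δ
  | .top => True
  | .bot => True
  | .neg φ => Supports Δ φ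
  | .and φ ψ => Supports Δ φ ∧ Supports Δ ψ
  | .box _ φ => Supports Δ φ
  | .cbox _ φ => Supports Δ φ
  | .upd E _ pre post _ ψ =>
      (∀ f, Supports Δ (pre f)) ∧
      (∀ (f : E) (p : P), post f p = Form.atom p ∨ Supports Δ (post f p)) ∧
      Supports Δ ψ

theorem supports_mono {Δ Δ' : Set P} (h : Δ ⊆ Δ') :
    ∀ φ : Form A P, Supports Δ φ → Supports Δ' φ := by
  intro φ
  induction φ with
  | atom p => exact fun hp => h hp
  | top => exact fun _ => trivial
  | bot => exact fun _ => trivial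
  | neg φ ih => exact ih
  | and φ ψ ih1 ih2 => exact fun hh => ⟨ih1 hh.1, ih2 hh.2⟩
  | box a φ ih => exact ih
  | cbox B φ ih => exact ih
  | upd E rel pre post e ψ ihpre ihpost ihψ =>
    rintro ⟨h1, h2, h3⟩
    refine ⟨fun f => ihpre f (h1 f), fun f p => ?_, ihψ h3⟩
    rcases h2 f p with h | h
    · exact Or.inl h
    · exact Or.inr (ihpost f p h)

theorem exists_supports : ∀ φ : Form A P, φ.WF → ∃ Δ : Set P, Δ.Finite ∧ Supports Δ φ := by
  intro φ
  induction φ with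
  | atom p => exact fun _ => ⟨{p}, Set.finite_singleton p, rfl⟩
  | top => exact fun _ => ⟨∅, Set.finite_empty, trivial⟩
  | bot => exact fun _ => ⟨∅, Set.finite_empty, trivial⟩
  | neg φ ih => exact ih
  | and φ ψ ih1 ih2 =>
    rintro ⟨h1, h2⟩
    obtain ⟨Δ1, hf1, hs1⟩ := ih1 h1
    obtain ⟨Δ2, hf2, hs2⟩ := ih2 h2
    exact ⟨Δ1 ∪ Δ2, hf1.union hf2,
      supports_mono Set.subset_union_left _ hs1,
      supports_mono Set.subset_union_right _ hs2⟩
  | box a φ ih => exact ih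
  | cbox B φ ih => exact ih
  | upd E rel pre post e ψ ihpre ihpost ihψ =>
    rintro ⟨hne, hfinE, hpreWF, hpostWF, hdom, hψWF⟩
    haveI : Finite E := hfinE
    choose Δpre hpre1 hpre2 using fun f => ihpre f (hpreWF f)
    choose Δpost hpost1 hpost2 using fun f p => ihpost f p (hpostWF f p)
    obtain ⟨Δψ, hψ1, hψ2⟩ := ihψ hψWF
    refine ⟨Δψ ∪ ((⋃ f, Δpre f) ∪
        (⋃ f, ⋃ p ∈ {p | post f p ≠ Form.atom p}, Δpost f p)), ?_, ?_, ?_, ?_⟩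
    · exact hψ1.union ((Set.finite_iUnion hpre1).union
        (Set.finite_iUnion fun f => (hdom f).biUnion fun p _ => hpost1 f p))
    · intro f
      refine supports_mono (fun x hx => Or.inr (Or.inl ?_)) _ (hpre2 f)
      exact Set.mem_iUnion.mpr ⟨f, hx⟩
    · intro f p
      by_cases h : post f p = Form.atom p
      · exact Or.inl h
      · refine Or.inr (supports_mono (fun x hx => Or.inr (Or.inr ?_)) _ (hpost2 f p))
        exact Set.mem_iUnion.mpr ⟨f, Set.mem_biUnion h hx⟩
    · exact supports_mono Set.subset_union_left _ hψ2

/-- Restricted bisimulation invariance: if `Z` is a bisimulation up to atoms in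
`Δ` and `Δ` supports `φ`, then `Z`-related states agree on `φ`. -/
theorem invariance : ∀ (φ : Form A P) (Δ : Set P), Supports Δ φ →
    ∀ (N N' : Model A P) (Z : N.S → N'.S → Prop),
    (∀ n n', Z n n' →
      (∀ p ∈ Δ, N.V p n ↔ N'.V p n') ∧
      (∀ a t, N.R a n t → ∃ t', N'.R a n' t' ∧ Z t t') ∧
      (∀ a t', N'.R a n' t' → ∃ t, N.R a n t ∧ Z t t')) →
    ∀ n n', Z n n' → (sat φ N n ↔ sat φ N' n') := by
  intro φ
  induction φ with
  | atom p =>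
    intro Δ hs N N' Z hZ n n' hnn'
    exact (hZ n n' hnn').1 p hs
  | top => intro _ _ _ _ _ _ _ _ _; exact Iff.rfl
  | bot => intro _ _ _ _ _ _ _ _ _; exact Iff.rfl
  | neg φ ih =>
    intro Δ hs N N' Z hZ n n' hnn'
    exact not_congr (ih Δ hs N N' Z hZ n n' hnn')
  | and φ ψ ih1 ih2 =>
    intro Δ hs N N' Z hZ n n' hnn'
    exact and_congr (ih1 Δ hs.1 N N' Z hZ n n' hnn') (ih2 Δ hs.2 N N' Z hZ n n' hnn')
  | box a φ ih =>
    intro Δ hs N N' Z hZ n n' hnn'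
    constructor
    · intro h t' hR'
      obtain ⟨t, hR, hZt⟩ := (hZ n n' hnn').2.2 a t' hR'
      exact (ih Δ hs N N' Z hZ t t' hZt).mp (h t hR)
    · intro h t hR
      obtain ⟨t', hR', hZt⟩ := (hZ n n' hnn').2.1 a t hR
      exact (ih Δ hs N N' Z hZ t t' hZt).mpr (h t' hR')
  | cbox B φ ih =>
    intro Δ hs N N' Z hZ n n' hnn'
    have reach : ∀ m t, Relation.ReflTransGen (fun x y => ∃ a ∈ B, N.R a x y) m t →
        ∀ m', Z m m' → ∃ t', Relation.ReflTransGen (fun x y => ∃ a ∈ B, N'.R a x y) m' t' ∧ Z t t' := by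
      intro m t ht
      induction ht with
      | refl => exact fun m' hmm' => ⟨m', Relation.ReflTransGen.refl, hmm'⟩
      | tail _ hstep ih2 =>
        intro m' hmm'
        obtain ⟨u', hu', hZu⟩ := ih2 m' hmm'
        obtain ⟨a, ha, hR⟩ := hstep
        obtain ⟨t', hR', hZt⟩ := (hZ _ _ hZu).2.1 a _ hR
        exact ⟨t', hu'.tail ⟨a, ha, hR'⟩, hZt⟩
    have reach' : ∀ m' t', Relation.ReflTransGen (fun x y => ∃ a ∈ B, N'.R a x y) m' t' →
        ∀ m, Z m m' → ∃ t, Relation.ReflTransGen (fun x y => ∃ a ∈ B, N.R a x y) m t ∧ Z t t' := by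
      intro m' t' ht
      induction ht with
      | refl => exact fun m hmm' => ⟨m, Relation.ReflTransGen.refl, hmm'⟩
      | tail _ hstep ih2 =>
        intro m hmm'
        obtain ⟨u, hu, hZu⟩ := ih2 m hmm'
        obtain ⟨a, ha, hR⟩ := hstep
        obtain ⟨t, hR2, hZt⟩ := (hZ _ _ hZu).2.2 a _ hR
        exact ⟨t, hu.tail ⟨a, ha, hR2⟩, hZt⟩
    constructor
    · intro h t' ht'
      obtain ⟨t, ht, hZt⟩ := reach' n' t' ht' n hnn'
      exact (ih Δ hs N N' Z hZ t t' hZt).mp (h t ht)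
    · intro h t ht
      obtain ⟨t', ht', hZt⟩ := reach n t ht n' hnn'
      exact (ih Δ hs N N' Z hZ t t' hZt).mpr (h t' ht')
  | upd E rel pre post e ψ ihpre ihpost ihψ =>
    intro Δ hs N N' Z hZ n n' hnn'
    obtain ⟨hpre, hpost, hψ⟩ := hs
    set PN := prodM N E rel (fun f t => sat (pre f) N t) (fun f t p => sat (post f p) N t) with hPN
    set PN' := prodM N' E rel (fun f t => sat (pre f) N' t) (fun f t p => sat (post f p) N' t) with hPN'
    set Z' : PN.S → PN'.S → Prop := fun x x' => x.1.2 = x'.1.2 ∧ Z x.1.1 x'.1.1 with hZ'def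
    have hZ' : ∀ x x', Z' x x' →
        (∀ p ∈ Δ, PN.V p x ↔ PN'.V p x') ∧
        (∀ a y, PN.R a x y → ∃ y', PN'.R a x' y' ∧ Z' y y') ∧
        (∀ a y', PN'.R a x' y' → ∃ y, PN.R a x y ∧ Z' y y') := by
      rintro ⟨⟨t, f⟩, hx⟩ ⟨⟨t', f'⟩, hx'⟩ ⟨hef, hZt⟩
      dsimp only at hef
      subst hef
      refine ⟨?_, ?_, ?_⟩
      · intro p hp
        show sat (post f p) N t ↔ sat (post f p) N' t'
        rcases hpost f p with h | h
        · rw [h]; exact (hZ t t' hZt).1 p hp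
        · exact ihpost f p Δ h N N' Z hZ t t' hZt
      · rintro a ⟨⟨u, g⟩, hy⟩ ⟨hRN, hrel⟩
        obtain ⟨u', hR', hZu⟩ := (hZ t t' hZt).2.1 a u hRN
        have hu' : sat (pre g) N' u' := (ihpre g Δ (hpre g) N N' Z hZ u u' hZu).mp hy
        exact ⟨⟨(u', g), hu'⟩, ⟨hR', hrel⟩, rfl, hZu⟩
      · rintro a ⟨⟨u', g⟩, hy'⟩ ⟨hRN', hrel⟩
        obtain ⟨u, hR2, hZu⟩ := (hZ t t' hZt).2.2 a u' hRN'
        have hu : sat (pre g) N u := (ihpre g Δ (hpre g) N N' Z hZ u u' hZu).mpr hy'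
        exact ⟨⟨(u, g), hu⟩, ⟨hR2, hrel⟩, rfl, hZu⟩
    have hpe : sat (pre e) N n ↔ sat (pre e) N' n' := ihpre e Δ (hpre e) N N' Z hZ n n' hnn'
    constructor
    · intro h h'
      have hp : sat (pre e) N n := hpe.mpr h'
      exact (ihψ Δ hψ PN PN' Z' hZ' ⟨(n, e), hp⟩ ⟨(n', e), h'⟩ ⟨rfl, hnn'⟩).mp (h hp)
    · intro h hp
      have h' : sat (pre e) N' n' := hpe.mp hp
      exact (ihψ Δ hψ PN PN' Z' hZ' ⟨(n, e), hp⟩ ⟨(n', e), h'⟩ ⟨rfl, hnn'⟩).mpr (h h')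

theorem sat_bigOr (l : List (Form A P)) (N : Model A P) (t : N.S) :
    sat (bigOr l) N t ↔ ∃ ψ ∈ l, sat ψ N t := by
  induction l with
  | nil => simp [bigOr, sat]
  | cons φ l ih =>
    simp only [bigOr, List.foldr] at ih ⊢
    simp only [Form.or, sat, List.mem_cons]
    constructor
    · intro h
      by_cases hφ : sat φ N t
      · exact ⟨φ, Or.inl rfl, hφ⟩
      · have := not_and.mp h hφ
        push_neg at this
        obtain ⟨ψ, hm, hs⟩ := ih.mp this
        exact ⟨ψ, Or.inr hm, hs⟩
    · rintro ⟨ψ, hm | hm, hs⟩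
      · subst hm; exact fun hh => hh.1 hs
      · exact fun hh => hh.2 (ih.mpr ⟨ψ, hm, hs⟩)

theorem wf_bigOr {l : List (Form A P)} (h : ∀ ψ ∈ l, ψ.WF) : (bigOr l).WF := by
  induction l with
  | nil => trivial
  | cons φ l ih =>
    have : (bigOr (φ :: l)) = Form.or φ (bigOr l) := rfl
    rw [this]
    exact ⟨h φ List.mem_cons_self, ih fun ψ hm => h ψ (List.mem_cons_of_mem φ hm)⟩

theorem bisimilar_refl (M : Model A P) (s : M.S) : Bisimilar M M s s := by
  refine ⟨Eq, ⟨⟨s, s, rfl⟩, ?_⟩, rfl⟩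
  rintro x y rfl
  exact ⟨fun p => Iff.rfl, fun a t h => ⟨t, h, rfl⟩, fun a t h => ⟨t, h, rfl⟩⟩

end AuxRealization

/-- if `φ` is satisfied in some finite epistemic state `(M',s')`, only
finitely many atoms are relevant in `M` or in `M'`, there is a set `S^ser ∋ s` serial
for every agent whose relation in `M'` is nonempty, and each `(M,u)` for `u ∈ S^ser`
has a characteristic formula, then there is an update `(U,e)` realizing `φ` at the
finite epistemic state `(M,s)`: `(M,s) ⊨ ⟨U,e⟩φ`, i.e. `(M,s) ⊨ ¬[U,e]¬φ`. -/
theorem realization {A P : Type} [Finite A] [Countable P]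
    (M : Model A P) (hMne : Nonempty M.S) (hMfin : Finite M.S) (s : M.S)
    (φ : Form A P) (hφ : φ.WF)
    (M' : Model A P) (hM'ne : Nonempty M'.S) (hM'fin : Finite M'.S) (s' : M'.S)
    (hsat : sat φ M' s')
    (hrel : {p | Relevant M p ∨ Relevant M' p}.Finite)
    (Sser : Set M.S) (hsmem : s ∈ Sser)
    (hser : ∀ a : A, (∃ x y, M'.R a x y) → SerialOn M Sser a)
    (hδ : ∀ u ∈ Sser, ∃ d : Form A P, d.WF ∧ CharFml M u d) :
    ∃ (U : Upd A P) (e : U.E), U.WF ∧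
      sat (Form.neg (Form.updF U e (Form.neg φ))) M s := by
  classical
  choose d hdWF hdChar using hδ
  have hSfin : Sser.Finite := Set.toFinite Sser
  set L : List (Form A P) :=
    hSfin.toFinset.attach.toList.map
      (fun u => d u.1 ((Set.Finite.mem_toFinset hSfin).mp u.2)) with hLdef
  set pre0 : Form A P := bigOr L with hpre0def
  have hmemL : ∀ w (hw : w ∈ Sser), d w hw ∈ L := by
    intro w hw
    refine List.mem_map.mpr ⟨⟨w, (Set.Finite.mem_toFinset hSfin).mpr hw⟩, ?_, rfl⟩
    simp [Finset.mem_toList]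
  have propA : ∀ t : M.S, sat pre0 M t ↔ ∃ w ∈ Sser, Bisimilar M M t w := by
    intro t
    rw [hpre0def, sat_bigOr]
    constructor
    · rintro ⟨ψ, hm, hs⟩
      obtain ⟨u, _, rfl⟩ := List.mem_map.mp hm
      have hu : u.1 ∈ Sser := (Set.Finite.mem_toFinset hSfin).mp u.2
      exact ⟨u.1, hu, (hdChar u.1 hu M hMne t).mp hs⟩
    · rintro ⟨w, hw, hb⟩
      exact ⟨d w hw, hmemL w hw, (hdChar w hw M hMne t).mpr hb⟩
  have hpre0WF : pre0.WF := by
    refine wf_bigOr ?_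
    intro ψ hm
    obtain ⟨u, _, rfl⟩ := List.mem_map.mp hm
    exact hdWF u.1 _
  obtain ⟨Δ, hΔfin, hΔsup⟩ := exists_supports φ hφ
  set D : Set P := Δ ∪ {p | Relevant M p ∨ Relevant M' p} with hDdef
  set U : Upd A P :=
    ⟨M'.S, M'.R, fun _ => pre0,
      fun t' p => if p ∈ D then (if M'.V p t' then Form.top else Form.bot)
        else Form.atom p⟩ with hUdef
  refine ⟨U, s', ⟨hM'ne, hM'fin, fun _ => hpre0WF, ?_, ?_⟩, ?_⟩
  · intro f p
    show Form.WF (if p ∈ D then (if M'.V p f then Form.top else Form.bot) else Form.atom p)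
    split_ifs <;> trivial
  · intro f
    refine (hΔfin.union hrel).subset ?_
    intro p hp
    by_contra hpD
    apply hp
    show (if p ∈ D then (if M'.V p f then Form.top else Form.bot) else Form.atom p) = Form.atom p
    rw [if_neg hpD]
  · have hpres : sat pre0 M s := (propA s).mpr ⟨s, hsmem, bisimilar_refl M s⟩
    show ¬ _
    simp only [Form.updF, sat]
    intro hall
    set PN := prodM M U.E U.rel (fun f t => sat (U.pre f) M t)
      (fun f t p => sat (U.post f p) M t) with hPNdef
    set Z : PN.S → M'.S → Prop := fun x x' => x.1.2 = x' with hZdef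
    have hZbis : ∀ n n', Z n n' →
        (∀ p ∈ Δ, PN.V p n ↔ M'.V p n') ∧
        (∀ a t, PN.R a n t → ∃ t', M'.R a n' t' ∧ Z t t') ∧
        (∀ a t', M'.R a n' t' → ∃ t, PN.R a n t ∧ Z t t') := by
      rintro ⟨⟨t, t'⟩, hx⟩ u' hZx
      have hZx' : t' = u' := hZx
      subst hZx'
      refine ⟨?_, ?_, ?_⟩
      · intro p hp
        have hpD : p ∈ D := Or.inl hp
        show sat (U.post t' p) M t ↔ M'.V p t'
        show sat (if p ∈ D then (if M'.V p t' then Form.top else Form.bot)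
          else Form.atom p) M t ↔ M'.V p t'
        rw [if_pos hpD]
        by_cases hv : M'.V p t' <;> simp [hv, sat]
      · rintro a ⟨⟨u, g⟩, hy⟩ ⟨hRM, hRM'⟩
        exact ⟨g, hRM', rfl⟩
      · rintro a u' hR'
        obtain ⟨w, hw, Z0, hZ0, hZ0t⟩ := (propA t).mp hx
        obtain ⟨w', hw', hRw⟩ := hser a ⟨t', u', hR'⟩ w hw
        obtain ⟨u, hRu, hZ0u⟩ := (hZ0.2 t w hZ0t).2.2 a w' hRw
        have hu : sat pre0 M u := (propA u).mpr ⟨w', hw', Z0, hZ0, hZ0u⟩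
        exact ⟨⟨(u, u'), hu⟩, ⟨hRu, hR'⟩, rfl⟩
    have hsatprod : sat φ PN ⟨(s, s'), hpres⟩ :=
      (invariance φ Δ hΔsup PN M' Z hZbis ⟨(s, s'), hpres⟩ s' rfl).mpr hsat
    exact hall hpres hsatprod
end

section
/- Let U = (E, R, pre, post) be an update model with normal update model U^TF, and let M = (S, R, V) be an epistemic model such that the domain of M ⊗ U is nonempty. Then the relation Z defined by ((s,e), (s,(e,f))) ∈ Z iff (M,s) ⊨ pre^TF(e,f) is a bisimulation between M ⊗ U and M ⊗ U^TF; in particular (M ⊗ U) and (M ⊗ U^TF) are bisimilar, with every (s,e) in the domain of M ⊗ U linked to (s,(e,f)) for the function f given by f(p) = 1 iff (M,s) ⊨ post(e)(p). -/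
open Classical in
/-- The normal update model `U^TF`: events are pairs `(e,f)` with `f` a Boolean-valued
function on `dom(post(e))`; `(e,f)` and `(e',f')` are `a`-related iff `e` and `e'` are;
`pre^TF(e,f) = pre(e) ∧ ⋀_{f(p)=1} post(e)(p) ∧ ⋀_{f(p)=0} ¬post(e)(p)` (the
conjunction taken over the enumeration `d e` of `dom(post(e))`); and
`post^TF(e,f)(p)` is `⊤` if `f(p) = 1` and `⊥` if `f(p) = 0`, for `p ∈ dom(post(e))`,
and the identity on other atoms. -/
noncomputable def TF {A P : Type} (U : Upd A P) (d : U.E → List P) : Upd A P where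
  E := Σ e : U.E, ({ p : P // U.post e p ≠ Form.atom p } → Bool)
  rel a x y := U.rel a x.1 y.1
  pre x := (U.pre x.1).and (bigAnd ((d x.1).map (fun p =>
      if h : U.post x.1 p = Form.atom p then Form.top
      else if x.2 ⟨p, h⟩ then U.post x.1 p else Form.neg (U.post x.1 p))))
  post x p :=
    if h : U.post x.1 p = Form.atom p then Form.atom p
    else if x.2 ⟨p, h⟩ then Form.top else Form.bot


lemma sat_bigAnd {A P : Type} (l : List (Form A P)) (M : Model A P) (s : M.S) :
    sat (bigAnd l) M s ↔ ∀ φ ∈ l, sat φ M s := by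
  induction l with
  | nil => simp [bigAnd, sat]
  | cons a l ih =>
      simp only [bigAnd, List.foldr, sat, List.forall_mem_cons] at ih ⊢; rw [ih]

lemma sat_preTF {A P : Type} (U : Upd A P) (d : U.E → List P)
    (hd : ∀ e p, p ∈ d e ↔ U.post e p ≠ Form.atom p)
    (M : Model A P) (s : M.S) (x : (TF U d).E) :
    sat ((TF U d).pre x) M s ↔ sat (U.pre x.1) M s ∧
      ∀ q : { p : P // U.post x.1 p ≠ Form.atom p },
        (x.2 q = true ↔ sat (U.post x.1 q.1) M s) := by
  show sat (U.pre x.1) M s ∧ _ ↔ _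
  rw [sat_bigAnd]
  constructor
  · rintro ⟨h1, h2⟩
    refine ⟨h1, fun q => ?_⟩
    obtain ⟨p, hpne⟩ := q
    have := h2 _ (List.mem_map_of_mem ((hd x.1 p).2 hpne))
    rw [dif_neg hpne] at this
    by_cases hb : x.2 ⟨p, hpne⟩ = true
    · rw [if_pos hb] at this; simp [hb, this]
    · rw [if_neg hb] at this; simp only [sat] at this; simp [hb, this]
  · rintro ⟨h1, h2⟩
    refine ⟨h1, fun φ hφ => ?_⟩
    simp only [List.mem_map] at hφ
    obtain ⟨p, hp, rfl⟩ := hφ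
    have hne := (hd x.1 p).1 hp
    rw [dif_neg hne]
    have := h2 ⟨p, hne⟩
    by_cases hb : x.2 ⟨p, hne⟩ = true
    · rw [if_pos hb]; simp_all
    · rw [if_neg (by simp [hb])]; simp_all [sat]

/-- the relation `Z` given by `((s,e),(s,(e,f))) ∈ Z` iff
`(M,s) ⊨ pre^TF(e,f)` is a bisimulation between `M ⊗ U` and `M ⊗ U^TF`; in
particular `M ⊗ U` and `M ⊗ U^TF` are bisimilar, with every `(s,e)` in the domain
of `M ⊗ U` linked to `(s,(e,f))` for the function `f` given by `f(p) = 1` iff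
`(M,s) ⊨ post(e)(p)`.  (The list `d e` enumerates `dom(post(e))`.) -/
theorem normal_update_model_bisimulation {A P : Type} [Finite A] [Countable P]
    (M : Model A P) (hMne : Nonempty M.S)
    (U : Upd A P) (hU : U.WF)
    (d : U.E → List P) (hd : ∀ e p, p ∈ d e ↔ U.post e p ≠ Form.atom p)
    (hdom : Nonempty (M.prodUpd U).S) :
    Bisim (M.prodUpd U) (M.prodUpd (TF U d))
      (fun x y => x.1.1 = y.1.1 ∧ x.1.2 = y.1.2.1 ∧ sat ((TF U d).pre y.1.2) M x.1.1) ∧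
    ∀ x : (M.prodUpd U).S, ∃ y : (M.prodUpd (TF U d)).S,
      y.1.1 = x.1.1 ∧ y.1.2.1 = x.1.2 ∧
      (∀ q : { p : P // U.post y.1.2.1 p ≠ Form.atom p },
        (y.1.2.2 q = true ↔ sat (U.post x.1.2 q.1) M x.1.1)) ∧
      (x.1.1 = y.1.1 ∧ x.1.2 = y.1.2.1 ∧ sat ((TF U d).pre y.1.2) M x.1.1) := by
  classical
  have key : ∀ x : (M.prodUpd U).S, ∃ y : (M.prodUpd (TF U d)).S,
      y.1.1 = x.1.1 ∧ y.1.2.1 = x.1.2 ∧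
      (∀ q : { p : P // U.post y.1.2.1 p ≠ Form.atom p },
        (y.1.2.2 q = true ↔ sat (U.post x.1.2 q.1) M x.1.1)) ∧
      (x.1.1 = y.1.1 ∧ x.1.2 = y.1.2.1 ∧ sat ((TF U d).pre y.1.2) M x.1.1) := by
    rintro ⟨⟨s, e⟩, hpre⟩
    have hpre2 : sat ((TF U d).pre ⟨e, fun q => decide (sat (U.post e q.1) M s)⟩) M s := by
      refine (sat_preTF U d hd M _ _).2 ?_; exact ⟨hpre, fun q => by simp⟩
    exact ⟨⟨⟨s, ⟨e, fun q => decide (sat (U.post e q.1) M s)⟩⟩, hpre2⟩, rfl, rfl,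
      fun q => by simp, rfl, rfl, hpre2⟩
  refine ⟨⟨?_, ?_⟩, key⟩
  · obtain ⟨x⟩ := hdom
    obtain ⟨y, h1, h2, _, h4⟩ := key x
    exact ⟨x, y, h4⟩
  · rintro ⟨⟨s, e⟩, hs⟩ ⟨⟨s', ⟨e', f'⟩⟩, hs'⟩ ⟨heq1, heq2, hZ⟩
    dsimp at heq1 heq2
    subst heq1; subst heq2
    rw [sat_preTF U d hd] at hZ
    refine ⟨?_, ?_, ?_⟩
    · intro p
      show sat (U.post e p) M s ↔ sat ((TF U d).post ⟨e, f'⟩ p) M s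
      show _ ↔ sat (if h : U.post e p = Form.atom p then Form.atom p
        else if f' ⟨p, h⟩ then Form.top else Form.bot) M s
      by_cases h : U.post e p = Form.atom p
      · rw [dif_pos h, h]
      · rw [dif_neg h]
        have := hZ.2 ⟨p, h⟩
        by_cases hb : f' ⟨p, h⟩ = true
        · rw [if_pos hb]; simp_all [sat]
        · rw [if_neg (by simp [hb])]; simp_all [sat]
    · rintro a ⟨⟨t, e₂⟩, ht⟩ ⟨hR1, hR2⟩
      have hpre2 : sat ((TF U d).pre ⟨e₂, fun q => decide (sat (U.post e₂ q.1) M t)⟩) M t := by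
        refine (sat_preTF U d hd M _ _).2 ?_; exact ⟨ht, fun q => by simp⟩
      refine ⟨⟨⟨t, ⟨e₂, fun q => decide (sat (U.post e₂ q.1) M t)⟩⟩, hpre2⟩,
        ⟨hR1, hR2⟩, rfl, rfl, hpre2⟩
    · rintro a ⟨⟨t, ⟨e₂, f₂⟩⟩, ht⟩ ⟨hR1, hR2⟩
      have ht' := ht
      rw [sat_preTF U d hd] at ht'
      exact ⟨⟨⟨t, e₂⟩, ht'.1⟩, ⟨hR1, hR2⟩, rfl, rfl, ht⟩
end

section
/- Call a formula of L TF-normal if every update model occurring in it (including, recursively, update models occurring inside the preconditions and postconditions of events) has all its postconditions on their domains equal to ⊤ or ⊥. For every formula φ ∈ L there exists a TF-normal formula ψ ∈ L such that for every epistemic state (M,s): (M,s) ⊨ φ iff (M,s) ⊨ ψ. That is, the logic of change with postconditions true and false only is equally expressive as the logic of change with arbitrary postconditions. -/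
/-- A formula is TF-normal if every update model occurring in it (including,
recursively, update models occurring inside the preconditions and postconditions
of events) has all its postconditions on their domains equal to `⊤` or `⊥`. -/
def TFNormal {A P : Type} : Form A P → Prop
  | .atom _ => True
  | .top => True
  | .bot => True
  | .neg φ => TFNormal φ
  | .and φ ψ => TFNormal φ ∧ TFNormal ψ
  | .box _ φ => TFNormal φ
  | .cbox _ φ => TFNormal φ
  | .upd _ _ pre post _ φ =>
      (∀ f, TFNormal (pre f)) ∧ (∀ f p, TFNormal (post f p)) ∧
      (∀ f p, post f p = Form.atom p ∨ post f p = Form.top ∨ post f p = Form.bot) ∧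
      TFNormal φ


namespace TFAux

variable {A P : Type}

/-- Finite conjunction. -/
def bigAnd : List (Form A P) → Form A P
  | [] => .top
  | χ :: l => .and χ (bigAnd l)

theorem sat_bigAnd (l : List (Form A P)) (M : Model A P) (s : M.S) :
    sat (bigAnd l) M s ↔ ∀ χ ∈ l, sat χ M s := by
  induction l with
  | nil => simp [bigAnd, sat]
  | cons χ l ih => simp [bigAnd, sat, ih]

theorem WF_bigAnd {l : List (Form A P)} (h : ∀ χ ∈ l, χ.WF) : (bigAnd l).WF := by
  induction l with
  | nil => trivial
  | cons χ l ih =>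
      exact ⟨h χ (by simp), ih fun χ' hχ' => h χ' (by simp [hχ'])⟩

theorem TFN_bigAnd {l : List (Form A P)} (h : ∀ χ ∈ l, TFNormal χ) :
    TFNormal (bigAnd l) := by
  induction l with
  | nil => trivial
  | cons χ l ih =>
      exact ⟨h χ (by simp), ih fun χ' hχ' => h χ' (by simp [hχ'])⟩

/-- Satisfaction is invariant under isomorphism of models. -/
theorem sat_iso (φ : Form A P) :
    ∀ (M N : Model A P) (σ : M.S ≃ N.S),
      (∀ a s t, M.R a s t ↔ N.R a (σ s) (σ t)) →
      (∀ p s, M.V p s ↔ N.V p (σ s)) →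
      ∀ s, sat φ M s ↔ sat φ N (σ s) := by
  induction φ with
  | atom p => intro M N σ hR hV s; exact hV p s
  | top => intro _ _ _ _ _ _; simp [sat]
  | bot => intro _ _ _ _ _ _; simp [sat]
  | neg φ ih =>
      intro M N σ hR hV s
      simp only [sat]; rw [ih M N σ hR hV s]
  | and φ ψ ih1 ih2 =>
      intro M N σ hR hV s
      simp only [sat]; rw [ih1 M N σ hR hV s, ih2 M N σ hR hV s]
  | box a φ ih =>
      intro M N σ hR hV s
      simp only [sat]
      constructor
      · intro h t ht
        rw [← σ.apply_symm_apply t] at ht ⊢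
        rw [← ih M N σ hR hV]
        exact h _ ((hR a s _).mpr ht)
      · intro h t ht
        rw [ih M N σ hR hV]
        exact h _ ((hR a s t).mp ht)
  | cbox B φ ih =>
      intro M N σ hR hV s
      have key : ∀ x y : M.S,
          Relation.ReflTransGen (fun x y => ∃ a ∈ B, M.R a x y) x y →
          Relation.ReflTransGen (fun x y => ∃ a ∈ B, N.R a x y) (σ x) (σ y) := by
        intro x y h
        induction h with
        | refl => exact .refl
        | tail h1 h2 ih2 =>
            obtain ⟨a, ha, hr⟩ := h2
            exact ih2.tail ⟨a, ha, (hR a _ _).mp hr⟩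
      have key2 : ∀ x y : N.S,
          Relation.ReflTransGen (fun x y => ∃ a ∈ B, N.R a x y) x y →
          Relation.ReflTransGen (fun x y => ∃ a ∈ B, M.R a x y) (σ.symm x) (σ.symm y) := by
        intro x y h
        induction h with
        | refl => exact .refl
        | tail h1 h2 ih2 =>
            obtain ⟨a, ha, hr⟩ := h2
            refine ih2.tail ⟨a, ha, (hR a _ _).mpr ?_⟩
            simpa using hr
      simp only [sat]
      constructor
      · intro h t ht
        have h2 := key2 _ _ ht
        rw [σ.symm_apply_apply] at h2
        rw [← σ.apply_symm_apply t, ← ih M N σ hR hV]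
        exact h _ h2
      · intro h t ht
        rw [ih M N σ hR hV]
        exact h _ (key _ _ ht)
  | upd E rel pre post e φ ihpre ihpost ihφ =>
      intro M N σ hR hV s
      simp only [sat]
      have hpre' : ∀ f t, sat (pre f) M t ↔ sat (pre f) N (σ t) :=
        fun f t => ihpre f M N σ hR hV t
      let O := prodM M E rel (fun f t => sat (pre f) M t)
        (fun f t p => sat (post f p) M t)
      let O' := prodM N E rel (fun f t => sat (pre f) N t)
        (fun f t p => sat (post f p) N t)
      let σ' : O.S ≃ O'.S :=
        { toFun := fun x => ⟨(σ x.1.1, x.1.2), (hpre' _ _).mp x.2⟩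
          invFun := fun x => ⟨(σ.symm x.1.1, x.1.2), by
            have h := x.2
            rw [← σ.apply_symm_apply x.1.1] at h
            exact (hpre' _ _).mpr h⟩
          left_inv := fun x => by apply Subtype.ext; simp
          right_inv := fun x => by apply Subtype.ext; simp }
      have hR' : ∀ a x y, O.R a x y ↔ O'.R a (σ' x) (σ' y) := by
        intro a x y
        constructor
        · rintro ⟨h1, h2⟩; exact ⟨(hR a _ _).mp h1, h2⟩
        · rintro ⟨h1, h2⟩; exact ⟨(hR a _ _).mpr h1, h2⟩
      have hV' : ∀ p x, O.V p x ↔ O'.V p (σ' x) :=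
        fun p x => ihpost x.1.2 p M N σ hR hV x.1.1
      constructor
      · intro h hp
        have hp' : sat (pre e) M s := (hpre' e s).mpr hp
        exact (ihφ O O' σ' hR' hV' ⟨(s, e), hp'⟩).mp (h hp')
      · intro h hp
        have hp' : sat (pre e) N (σ s) := (hpre' e s).mp hp
        exact (ihφ O O' σ' hR' hV' ⟨(s, e), hp⟩).mpr (h hp')

/-- Main induction: every well-formed formula has a TF-normal equivalent. -/
theorem main (φ : Form A P) : φ.WF → ∃ ψ : Form A P, ψ.WF ∧ TFNormal ψ ∧
    ∀ (M : Model A P) (s : M.S), sat φ M s ↔ sat ψ M s := by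
  induction φ with
  | atom p => exact fun _ => ⟨.atom p, trivial, trivial, fun _ _ => .rfl⟩
  | top => exact fun _ => ⟨.top, trivial, trivial, fun _ _ => .rfl⟩
  | bot => exact fun _ => ⟨.bot, trivial, trivial, fun _ _ => .rfl⟩
  | neg φ ih =>
      intro hWF
      obtain ⟨ψ, h1, h2, h3⟩ := ih hWF
      exact ⟨.neg ψ, h1, h2, fun M s => by simp only [sat]; rw [h3 M s]⟩
  | and φ χ ih1 ih2 =>
      intro hWF
      obtain ⟨ψ1, h1, h2, h3⟩ := ih1 hWF.1
      obtain ⟨ψ2, h1', h2', h3'⟩ := ih2 hWF.2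
      exact ⟨.and ψ1 ψ2, ⟨h1, h1'⟩, ⟨h2, h2'⟩,
        fun M s => by simp only [sat]; rw [h3 M s, h3' M s]⟩
  | box a φ ih =>
      intro hWF
      obtain ⟨ψ, h1, h2, h3⟩ := ih hWF
      refine ⟨.box a ψ, h1, h2, fun M s => ?_⟩
      simp only [sat]
      exact forall_congr' fun t => imp_congr .rfl (h3 M t)
  | cbox B φ ih =>
      intro hWF
      obtain ⟨ψ, h1, h2, h3⟩ := ih hWF
      refine ⟨.cbox B ψ, h1, h2, fun M s => ?_⟩
      simp only [sat]
      exact forall_congr' fun t => imp_congr .rfl (h3 M t)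
  | upd E rel pre post e φ ihpre ihpost ihφ =>
      intro hWF
      classical
      obtain ⟨hne, hfin, hpreWF, hpostWF, hdom, hφWF⟩ := hWF
      haveI : Finite E := hfin
      choose pre' hpre'WF hpre'TF hpre' using fun f => ihpre f (hpreWF f)
      choose post0 hpost0WF hpost0TF hpost0 using fun f p => ihpost f p (hpostWF f p)
      obtain ⟨φ', hφ'WF, hφ'TF, hφ'⟩ := ihφ hφWF
      set Dset : E → Finset P := fun f => (hdom f).toFinset with hDset
      have hmemD : ∀ f p, p ∈ Dset f ↔ post f p ≠ Form.atom p := by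
        intro f p; simp [hDset, Set.Finite.mem_toFinset]
      -- the new event type: an event together with a valuation of the domain
      let E' : Type := (f : E) × ({p // p ∈ Dset f} → Bool)
      haveI : Finite E' := by infer_instance
      let rel' : A → E' → E' → Prop := fun a x y => rel a x.1 y.1
      let pre'' : E' → Form A P := fun x =>
        .and (pre' x.1) (bigAnd (((Dset x.1).attach.toList).map
          (fun q => if x.2 q then post0 x.1 q.1 else .neg (post0 x.1 q.1))))
      let post'' : E' → P → Form A P := fun x p =>
        if h : p ∈ Dset x.1 then (if x.2 ⟨p, h⟩ then .top else .bot) else .atom p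
      haveI : Fintype ({p // p ∈ Dset e} → Bool) := Fintype.ofFinite _
      let ψ : Form A P := bigAnd
        (((Finset.univ : Finset ({p // p ∈ Dset e} → Bool)).toList).map
          (fun v => Form.upd E' rel' pre'' post'' ⟨e, v⟩ φ'))
      have hpre''WF : ∀ x : E', (pre'' x).WF := by
        intro x
        refine ⟨hpre'WF x.1, WF_bigAnd ?_⟩
        intro χ hχ
        simp only [List.mem_map] at hχ
        obtain ⟨q, _, rfl⟩ := hχ
        by_cases h : x.2 q = true
        · simpa [h] using hpost0WF x.1 q.1
        · simp only [Bool.not_eq_true] at h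
          simpa [h, Form.WF] using hpost0WF x.1 q.1
      have hpre''TF : ∀ x : E', TFNormal (pre'' x) := by
        intro x
        refine ⟨hpre'TF x.1, TFN_bigAnd ?_⟩
        intro χ hχ
        simp only [List.mem_map] at hχ
        obtain ⟨q, _, rfl⟩ := hχ
        by_cases h : x.2 q = true
        · simpa [h] using hpost0TF x.1 q.1
        · simp only [Bool.not_eq_true] at h
          simpa [h, TFNormal] using hpost0TF x.1 q.1
      have hpost''WF : ∀ (x : E') (p : P), (post'' x p).WF := by
        intro x p
        by_cases h : p ∈ Dset x.1
        · by_cases h2 : x.2 ⟨p, h⟩ = true <;>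
            (try simp only [Bool.not_eq_true] at *) <;> simp [post'', h, h2] <;> trivial
        · simp [post'', h]; trivial
      have hpost''TF : ∀ (x : E') (p : P), TFNormal (post'' x p) := by
        intro x p
        by_cases h : p ∈ Dset x.1
        · by_cases h2 : x.2 ⟨p, h⟩ = true <;>
            (try simp only [Bool.not_eq_true] at *) <;> simp [post'', h, h2] <;> trivial
        · simp [post'', h]; trivial
      have hpost''tfb : ∀ (x : E') (p : P),
          post'' x p = Form.atom p ∨ post'' x p = Form.top ∨ post'' x p = Form.bot := by
        intro x p
        by_cases h : p ∈ Dset x.1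
        · by_cases h2 : x.2 ⟨p, h⟩ = true
          · right; left; simp [post'', h, h2]
          · right; right
            simp only [Bool.not_eq_true] at h2
            simp [post'', h, h2]
        · left; simp [post'', h]
      have hpost''dom : ∀ x : E', {p | post'' x p ≠ Form.atom p}.Finite := by
        intro x
        refine Set.Finite.subset (Dset x.1).finite_toSet ?_
        intro p hp
        by_contra h
        have h' : p ∉ Dset x.1 := by simpa using h
        exact hp (dif_neg h')
      refine ⟨ψ, ?_, ?_, ?_⟩
      · -- WF
        refine WF_bigAnd ?_
        intro χ hχ
        simp only [List.mem_map] at hχ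
        obtain ⟨v, _, rfl⟩ := hχ
        exact ⟨⟨⟨e, v⟩⟩, inferInstance, hpre''WF, hpost''WF, hpost''dom, hφ'WF⟩
      · -- TFNormal
        refine TFN_bigAnd ?_
        intro χ hχ
        simp only [List.mem_map] at hχ
        obtain ⟨v, _, rfl⟩ := hχ
        exact ⟨hpre''TF, hpost''TF, hpost''tfb, hφ'TF⟩
      · -- semantic equivalence
        intro M s
        -- the canonical valuation
        let vCan : (f : E) → M.S → ({p // p ∈ Dset f} → Bool) :=
          fun f t q => decide (sat (post f q.1) M t)
        have hsatpre'' : ∀ (f : E) (v : {p // p ∈ Dset f} → Bool) (t : M.S),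
            sat (pre'' ⟨f, v⟩) M t ↔
            (sat (pre f) M t ∧ ∀ q : {p // p ∈ Dset f},
              (v q = true ↔ sat (post f q.1) M t)) := by
          intro f v t
          show sat (pre' f) M t ∧ _ ↔ _
          rw [sat_bigAnd, ← hpre' f M t]
          constructor
          · rintro ⟨h1, h2⟩
            refine ⟨h1, fun q => ?_⟩
            have hq := h2 _ (List.mem_map.mpr ⟨q, by simp, rfl⟩)
            by_cases hv : v q = true
            · simp only [hv, if_true] at hq
              exact ⟨fun _ => (hpost0 f q.1 M t).mpr hq, fun _ => hv⟩
            · simp only [Bool.not_eq_true] at hv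
              simp only [hv, Bool.false_eq_true, if_false] at hq
              have : ¬ sat (post0 f q.1) M t := hq
              constructor
              · intro hcon; rw [hv] at hcon; exact absurd hcon (by simp)
              · intro hs; exact absurd ((hpost0 f q.1 M t).mp hs) this
          · rintro ⟨h1, h2⟩
            refine ⟨h1, fun χ hχ => ?_⟩
            simp only [List.mem_map] at hχ
            obtain ⟨q, _, rfl⟩ := hχ
            by_cases hv : v q = true
            · simp only [hv, if_true]
              exact (hpost0 f q.1 M t).mp ((h2 q).mp hv)
            · simp only [Bool.not_eq_true] at hv
              simp only [hv, Bool.false_eq_true, if_false]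
              show ¬ sat (post0 f q.1) M t
              intro hcon
              have := (h2 q).mpr ((hpost0 f q.1 M t).mpr hcon)
              rw [hv] at this; exact absurd this (by simp)
        have hpre''_to : ∀ (f : E) (v : {p // p ∈ Dset f} → Bool) (t : M.S),
            sat (pre'' ⟨f, v⟩) M t → sat (pre f) M t ∧ v = vCan f t := by
          intro f v t h
          obtain ⟨h1, h2⟩ := (hsatpre'' f v t).mp h
          refine ⟨h1, funext fun q => ?_⟩
          by_cases hv : v q = true
          · rw [hv]; symm; exact decide_eq_true ((h2 q).mp hv)
          · simp only [Bool.not_eq_true] at hv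
            rw [hv]; symm
            refine decide_eq_false ?_
            intro hcon
            have := (h2 q).mpr hcon
            rw [hv] at this; exact absurd this (by simp)
        have hpre''_of : ∀ (f : E) (t : M.S),
            sat (pre f) M t → sat (pre'' ⟨f, vCan f t⟩) M t := by
          intro f t h
          refine (hsatpre'' f _ t).mpr ⟨h, fun q => ?_⟩
          simp [vCan]
        -- the two product models
        let O := prodM M E rel (fun f t => sat (pre f) M t)
          (fun f t p => sat (post f p) M t)
        let Nn := prodM M E' rel' (fun x t => sat (pre'' x) M t)
          (fun x t p => sat (post'' x p) M t)
        let σ : O.S ≃ Nn.S :=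
          { toFun := fun x => ⟨(x.1.1, ⟨x.1.2, vCan x.1.2 x.1.1⟩),
              hpre''_of x.1.2 x.1.1 x.2⟩
            invFun := fun y => ⟨(y.1.1, y.1.2.1),
              (hpre''_to y.1.2.1 y.1.2.2 y.1.1 y.2).1⟩
            left_inv := fun x => Subtype.ext rfl
            right_inv := fun y => by
              apply Subtype.ext
              have hv := (hpre''_to y.1.2.1 y.1.2.2 y.1.1 y.2).2
              show (y.1.1, (⟨y.1.2.1, vCan y.1.2.1 y.1.1⟩ : E')) = y.1
              rw [← hv] }
        have hRσ : ∀ a x y, O.R a x y ↔ Nn.R a (σ x) (σ y) := fun a x y => Iff.rfl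
        have hVσ : ∀ p x, O.V p x ↔ Nn.V p (σ x) := by
          intro p x
          obtain ⟨⟨t, f⟩, hx⟩ := x
          show sat (post f p) M t ↔ sat (post'' ⟨f, vCan f t⟩ p) M t
          by_cases h : p ∈ Dset f
          · by_cases hs : sat (post f p) M t
            · have : vCan f t ⟨p, h⟩ = true := decide_eq_true hs
              simp [post'', h, this, sat, hs]
            · have : vCan f t ⟨p, h⟩ = false := decide_eq_false hs
              simp [post'', h, this, sat, hs]
          · have hpa : post f p = Form.atom p := by
              by_contra hcon
              exact h ((hmemD f p).mpr hcon)
            simp only [post'', dif_neg h, hpa]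
        have hiso := sat_iso φ' O Nn σ hRσ hVσ
        -- now the main equivalence
        show (∀ h : sat (pre e) M s, sat φ O ⟨(s, e), h⟩) ↔ sat ψ M s
        rw [sat_bigAnd]
        constructor
        · intro H χ hχ
          simp only [List.mem_map] at hχ
          obtain ⟨v, _, rfl⟩ := hχ
          intro h'
          obtain ⟨h, hv⟩ := hpre''_to e v s h'
          have h1 : sat φ' O ⟨(s, e), h⟩ := (hφ' O ⟨(s, e), h⟩).mp (H h)
          have h2 := (hiso ⟨(s, e), h⟩).mp h1
          subst hv
          exact h2
        · intro H h
          have h' := hpre''_of e s h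
          have hmem : Form.upd E' rel' pre'' post'' ⟨e, vCan e s⟩ φ' ∈
              ((Finset.univ : Finset ({p // p ∈ Dset e} → Bool)).toList).map
                (fun v => Form.upd E' rel' pre'' post'' ⟨e, v⟩ φ') :=
            List.mem_map.mpr ⟨vCan e s, by simp [Finset.mem_toList], rfl⟩
          have h2 := H _ hmem h'
          have h3 : sat φ' Nn (σ ⟨(s, e), h⟩) := h2
          exact (hφ' O ⟨(s, e), h⟩).mpr ((hiso ⟨(s, e), h⟩).mpr h3)

end TFAux

/-- for every formula `φ ∈ L` there exists a TF-normal formula `ψ ∈ L`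
such that for every epistemic state `(M,s)`: `(M,s) ⊨ φ` iff `(M,s) ⊨ ψ`.  That is,
the logic of change with postconditions true and false only is equally expressive
as the logic of change with arbitrary postconditions. -/
theorem tf_normal_equally_expressive {A P : Type} [Finite A] [Countable P]
    (φ : Form A P) (hφ : φ.WF) :
    ∃ ψ : Form A P, ψ.WF ∧ TFNormal ψ ∧
      ∀ M : Model A P, Nonempty M.S → ∀ s : M.S, (sat φ M s ↔ sat ψ M s) := by
  obtain ⟨ψ, h1, h2, h3⟩ := TFAux.main φ hφ
  exact ⟨ψ, h1, h2, fun M _ s => h3 M s⟩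
end

section
/- Let U = (E, R, pre, post) be an update model, let M = (S, R, V) be an epistemic model such that the domain of M ⊗ U is nonempty, and let Q ⊆ P be a set of atoms not occurring in U (neither in preconditions, nor in postcondition values, nor in postcondition domains) of cardinality Σ_{e ∈ E} (|dom(post(e))| + 1). Then there exists a finite sequence U₁, …, U_m of update models, each of whose events g satisfies |dom(post(g))| ≤ 1 (at most one atom is assigned by each event), such that the iterated product N = (…(M ⊗ U₁) ⊗ …) ⊗ U_m has nonempty domain and there is a bijection h from the domain of M ⊗ U onto the domain of N that preserves and reflects each accessibility relation R(a) and preserves and reflects the valuation of every atom p ∈ P \ Q. -/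
/-- The atom `q` occurs in a formula: as an atom, or inside an update model occurring
in it (in a precondition, in a postcondition value, or in a postcondition domain). -/
def occursIn {A P : Type} (q : P) : Form A P → Prop
  | .atom p => p = q
  | .top => False
  | .bot => False
  | .neg φ => occursIn q φ
  | .and φ ψ => occursIn q φ ∨ occursIn q ψ
  | .box _ φ => occursIn q φ
  | .cbox _ φ => occursIn q φ
  | .upd _ _ pre post _ φ =>
      (∃ f, occursIn q (pre f)) ∨ (∃ f p, occursIn q (post f p)) ∨
      (∃ f, post f q ≠ Form.atom q) ∨ occursIn q φ

/-- The atom `q` occurs in the update model `U`: in a precondition, in a postcondition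
value, or in a postcondition domain. -/
def Upd.occursAtom {A P : Type} (U : Upd A P) (q : P) : Prop :=
  (∃ f, occursIn q (U.pre f)) ∨ (∃ f p, occursIn q (U.post f p)) ∨
  (∃ f, U.post f q ≠ Form.atom q)

/-- Iterated product update `(…(M ⊗ U₁) ⊗ …) ⊗ U_m`. -/
def prodUpds {A P : Type} : Model A P → List (Upd A P) → Model A P
  | M, [] => M
  | M, U :: l => prodUpds (M.prodUpd U) l


section Aux
variable {A P : Type}

theorem satiso (φ : Form A P) :
    ∀ (M N : Model A P) (h : M.S → N.S), Function.Bijective h →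
      (∀ a x y, M.R a x y ↔ N.R a (h x) (h y)) →
      (∀ p, occursIn p φ → ∀ x, M.V p x ↔ N.V p (h x)) →
      ∀ s, sat φ M s ↔ sat φ N (h s) := by
  induction φ with
  | atom p =>
    intro M N h _ _ hV s
    exact hV p rfl s
  | top => intro M N h _ _ _ s; simp [sat]
  | bot => intro M N h _ _ _ s; simp [sat]
  | neg φ ih =>
    intro M N h hb hR hV s
    simpa [sat] using not_congr (ih M N h hb hR hV s)
  | and φ ψ ihφ ihψ =>
    intro M N h hb hR hV s
    exact and_congr (ihφ M N h hb hR (fun p hp => hV p (Or.inl hp)) s)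
      (ihψ M N h hb hR (fun p hp => hV p (Or.inr hp)) s)
  | box a φ ih =>
    intro M N h hb hR hV s
    simp only [sat]
    constructor
    · intro H t' hmt
      obtain ⟨t, rfl⟩ := hb.2 t'
      exact (ih M N h hb hR hV t).mp (H t ((hR a s t).mpr hmt))
    · intro H t hmt
      exact (ih M N h hb hR hV t).mpr (H (h t) ((hR a s t).mp hmt))
  | cbox B φ ih =>
    intro M N h hb hR hV s
    simp only [sat]
    constructor
    · intro H t' hmt
      have key : ∀ u, Relation.ReflTransGen (fun x y => ∃ a ∈ B, N.R a x y) (h s) u →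
          ∃ t, h t = u ∧ Relation.ReflTransGen (fun x y => ∃ a ∈ B, M.R a x y) s t := by
        intro u hu
        induction hu with
        | refl => exact ⟨s, rfl, Relation.ReflTransGen.refl⟩
        | @tail u' v h1 h2 ih2 =>
          obtain ⟨t, rfl, htr⟩ := ih2
          obtain ⟨t', rfl⟩ := hb.2 v
          obtain ⟨a, ha, hna⟩ := h2
          exact ⟨t', rfl, htr.tail ⟨a, ha, (hR a t t').mpr hna⟩⟩
      obtain ⟨t, rfl, htr⟩ := key t' hmt
      exact (ih M N h hb hR hV t).mp (H t htr)
    · intro H t hmt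
      have key : Relation.ReflTransGen (fun x y => ∃ a ∈ B, N.R a x y) (h s) (h t) := by
        induction hmt with
        | refl => exact Relation.ReflTransGen.refl
        | tail h1 h2 ih2 =>
          obtain ⟨a, ha, hna⟩ := h2
          exact ih2.tail ⟨a, ha, (hR a _ _).mp hna⟩
      exact (ih M N h hb hR hV t).mpr (H (h t) key)
  | upd E rel pre post e φ ihpre ihpost ihφ =>
    intro M N h hb hR hV s
    have hpre : ∀ f t, sat (pre f) M t ↔ sat (pre f) N (h t) := fun f t =>
      ihpre f M N h hb hR (fun p hp x => hV p (Or.inl ⟨f, hp⟩) x) t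
    have hpost : ∀ f p t, sat (post f p) M t ↔ sat (post f p) N (h t) := fun f p t =>
      ihpost f p M N h hb hR (fun q hq x => hV q (Or.inr (Or.inl ⟨f, p, hq⟩)) x) t
    simp only [sat]
    let MM := prodM M E rel (fun f t => sat (pre f) M t) (fun f t p => sat (post f p) M t)
    let NN := prodM N E rel (fun f t => sat (pre f) N t) (fun f t p => sat (post f p) N t)
    let h' : MM.S → NN.S := fun y => ⟨(h y.1.1, y.1.2), (hpre _ _).mp y.2⟩
    have hb' : Function.Bijective h' := by
      constructor
      · intro x y hxy
        have h1 : (h x.1.1, x.1.2) = (h y.1.1, y.1.2) := congrArg Subtype.val hxy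
        injection h1 with h2 h3
        exact Subtype.ext (Prod.ext (hb.1 h2) h3)
      · rintro ⟨⟨u, f⟩, hu⟩
        obtain ⟨t, rfl⟩ := hb.2 u
        exact ⟨⟨(t, f), (hpre f t).mpr hu⟩, rfl⟩
    have hR' : ∀ a x y, MM.R a x y ↔ NN.R a (h' x) (h' y) := by
      intro a x y
      exact and_congr (hR a x.1.1 y.1.1) Iff.rfl
    have hV' : ∀ p, occursIn p φ → ∀ x : MM.S, MM.V p x ↔ NN.V p (h' x) := by
      intro p _ x
      exact hpost x.1.2 p x.1.1
    have key : ∀ (x : MM.S), sat φ MM x ↔ sat φ NN (h' x) :=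
      fun x => ihφ MM NN h' hb' hR' hV' x
    constructor
    · intro H hp'
      exact (key ⟨(s, e), (hpre e s).mpr hp'⟩).mp (H ((hpre e s).mpr hp'))
    · intro H hp
      exact (key ⟨(s, e), hp⟩).mpr (H ((hpre e s).mp hp))

end Aux
section Aux2
variable {A P : Type}

/-- A public single assignment `t := φ`. -/
noncomputable def assign (t : P) (φ : Form A P) : Upd A P where
  E := Unit
  rel := fun _ _ _ => True
  pre := fun _ => Form.top
  post := fun _ p => @ite _ (p = t) (Classical.propDecidable _) φ (Form.atom p)

theorem assign_WF (t : P) (φ : Form A P) (hφ : φ.WF) : (assign t φ).WF := by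
  refine ⟨⟨()⟩, inferInstanceAs (Finite Unit), fun f => trivial, ?_, ?_⟩
  · intro f p
    by_cases h : p = t
    · simpa [assign, h] using hφ
    · simp [assign, h, Form.WF]
  · intro f
    apply Set.Finite.subset (Set.finite_singleton t)
    intro p hp
    by_cases h : p = t
    · exact h
    · simp [assign, h] at hp

theorem assign_single (t : P) (φ : Form A P) (f : (assign t φ).E) :
    {p | (assign t φ).post f p ≠ Form.atom p}.Subsingleton := by
  intro a ha b hb
  have hat : a = t := by
    by_contra h
    simp [assign, h] at ha
  have hbt : b = t := by
    by_contra h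
    simp [assign, h] at hb
  rw [hat, hbt]

noncomputable def jmap (N : Model A P) (t : P) (φ : Form A P) :
    N.S → (N.prodUpd (assign t φ)).S :=
  fun s => ⟨(s, ()), True.intro⟩

theorem jmap_bij (N : Model A P) (t : P) (φ : Form A P) :
    Function.Bijective (jmap N t φ) := by
  constructor
  · intro x y h
    exact congrArg (fun z => z.1.1) h
  · intro y
    exact ⟨y.1.1, rfl⟩

theorem jmap_R (N : Model A P) (t : P) (φ : Form A P) (a : A) (x y : N.S) :
    N.R a x y ↔ (N.prodUpd (assign t φ)).R a (jmap N t φ x) (jmap N t φ y) :=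
  ⟨fun h => ⟨h, trivial⟩, fun h => h.1⟩

theorem jmap_V_eq (N : Model A P) (t : P) (φ : Form A P) (x : N.S) :
    (N.prodUpd (assign t φ)).V t (jmap N t φ x) ↔ sat φ N x := by
  show sat (@ite _ (t = t) (Classical.propDecidable _) φ (Form.atom t)) N x ↔ _
  rw [if_pos rfl]

theorem jmap_V_ne (N : Model A P) (t : P) (φ : Form A P) (p : P) (hp : p ≠ t) (x : N.S) :
    (N.prodUpd (assign t φ)).V p (jmap N t φ x) ↔ N.V p x := by
  show sat (@ite _ (p = t) (Classical.propDecidable _) φ (Form.atom p)) N x ↔ _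
  rw [if_neg hp]
  exact Iff.rfl

@[simp] theorem prodUpds_nil (M : Model A P) : prodUpds M ([] : List (Upd A P)) = M := rfl
@[simp] theorem prodUpds_cons (M : Model A P) (U : Upd A P) (l : List (Upd A P)) :
    prodUpds M (U :: l) = prodUpds (M.prodUpd U) l := rfl

theorem prodUpds_append (M : Model A P) (l₁ l₂ : List (Upd A P)) :
    prodUpds M (l₁ ++ l₂) = prodUpds (prodUpds M l₁) l₂ := by
  induction l₁ generalizing M with
  | nil => rfl
  | cons a l ih => simp [ih]

/-- Chain of assignments of formulas avoiding `Q` to distinct atoms in `Q`. -/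
theorem chain (Q : Set P) :
    ∀ (items : List (P × Form A P)) (N : Model A P),
      (∀ it ∈ items, it.1 ∈ Q) →
      (items.map Prod.fst).Nodup →
      (∀ it ∈ items, ∀ q ∈ Q, ¬ occursIn q it.2) →
      ∃ (N' : Model A P) (g : N.S → N'.S),
        N' = prodUpds N (items.map fun it => assign it.1 it.2) ∧
        Function.Bijective g ∧
        (∀ a x y, N.R a x y ↔ N'.R a (g x) (g y)) ∧
        (∀ p, (∀ it ∈ items, p ≠ it.1) → ∀ x, (N.V p x ↔ N'.V p (g x))) ∧
        (∀ it ∈ items, ∀ x, (N'.V it.1 (g x) ↔ sat it.2 N x)) := by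
  intro items
  induction items with
  | nil =>
    intro N _ _ _
    exact ⟨N, id, rfl, Function.bijective_id, fun _ _ _ => Iff.rfl, fun _ _ _ => Iff.rfl,
      fun it hit => absurd hit List.not_mem_nil⟩
  | cons hd tl ih =>
    intro N hQ hnd hfree
    obtain ⟨t, φ⟩ := hd
    have hndtl : (tl.map Prod.fst).Nodup := (List.nodup_cons.mp hnd).2
    have htnotin : t ∉ tl.map Prod.fst := (List.nodup_cons.mp hnd).1
    obtain ⟨N₂, g', hN₂, hgb, hgR, hgV, hgT⟩ := ih (N.prodUpd (assign t φ))
      (fun it hit => hQ it (List.mem_cons_of_mem _ hit)) hndtl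
      (fun it hit => hfree it (List.mem_cons_of_mem _ hit))
    refine ⟨N₂, fun x => g' (jmap N t φ x), by rw [hN₂]; rfl,
      hgb.comp (jmap_bij N t φ), ?_, ?_, ?_⟩
    · intro a x y
      exact (jmap_R N t φ a x y).trans (hgR a _ _)
    · intro p hp x
      have hpt : p ≠ t := hp (t, φ) List.mem_cons_self
      exact (jmap_V_ne N t φ p hpt x).symm.trans
        (hgV p (fun it hit => hp it (List.mem_cons_of_mem _ hit)) (jmap N t φ x))
    · intro it hit x
      rcases List.mem_cons.mp hit with h | h
      · subst h
        have h1 : ∀ it' ∈ tl, t ≠ it'.1 := by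
          intro it' hit' he
          exact htnotin (he ▸ List.mem_map.mpr ⟨it', hit', rfl⟩)
        exact ((hgV t h1 (jmap N t φ x)).symm).trans (jmap_V_eq N t φ x)
      · have hiso : sat it.2 (N.prodUpd (assign t φ)) (jmap N t φ x) ↔ sat it.2 N x := by
          refine (satiso it.2 N (N.prodUpd (assign t φ)) (jmap N t φ) (jmap_bij N t φ) (jmap_R N t φ) ?_ x).symm
          intro q hq y
          have hqt : q ≠ t := by
            intro he
            exact hfree it (List.mem_cons_of_mem _ h) t (he ▸ hQ (t, φ) List.mem_cons_self) (he ▸ hq)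
          exact (jmap_V_ne N t φ q hqt y).symm
        exact (hgT it h (jmap N t φ x)).trans hiso

end Aux2
section Aux3
variable {A P : Type}

/-- `p := (r e ∧ q_{e,p}) ∨ (¬ r e ∧ p)` written with `¬,∧`. -/
def Phi (rA : P) (qA : P) (p : P) : Form A P :=
  .neg (.and (.neg (.and (.atom rA) (.atom qA)))
             (.neg (.and (.neg (.atom rA)) (.atom p))))

theorem Phi_WF (rA qA p : P) : (Phi (A := A) rA qA p).WF := by
  simp [Phi, Form.WF]

theorem sat_Phi (rA qA p : P) (K : Model A P) (z : K.S) :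
    sat (Phi rA qA p) K z ↔ ((K.V rA z ∧ K.V qA z) ∨ (¬ K.V rA z ∧ K.V p z)) := by
  simp only [Phi, sat]
  tauto

theorem phase3 (M : Model A P) (U : Upd A P) (Q : Set P)
    (rA : U.E → P) (qA : (e : U.E) → {p // U.post e p ≠ Form.atom p} → P)
    (hrQ : ∀ e, rA e ∈ Q) (hqQ : ∀ e d, qA e d ∈ Q) :
    ∀ (rest : List ((e : U.E) × {p // U.post e p ≠ Form.atom p})),
      (∀ y ∈ rest, y.2.1 ∉ Q) →
      ∀ (K : Model A P) (H : (M.prodUpd U).S → K.S)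
        (cur : P → (M.prodUpd U).S → Prop),
        Function.Bijective H →
        (∀ a x y, (M.prodUpd U).R a x y ↔ K.R a (H x) (H y)) →
        (∀ e x, K.V (rA e) (H x) ↔ e = x.1.2) →
        (∀ e d x, K.V (qA e d) (H x) ↔ sat (U.post e d.1) M x.1.1) →
        (∀ p, p ∉ Q → ∀ x, K.V p (H x) ↔ cur p x) →
        ∃ (N' : Model A P) (H' : (M.prodUpd U).S → N'.S),
          N' = prodUpds K (rest.map fun y => assign y.2.1 (Phi (rA y.1) (qA y.1 y.2) y.2.1)) ∧
          Function.Bijective H' ∧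
          (∀ a x y, (M.prodUpd U).R a x y ↔ N'.R a (H' x) (H' y)) ∧
          (∀ (x : (M.prodUpd U).S) (p : P) (h : U.post x.1.2 p ≠ Form.atom p),
            (⟨x.1.2, ⟨p, h⟩⟩ : (e : U.E) × {p // U.post e p ≠ Form.atom p}) ∈ rest →
            (N'.V p (H' x) ↔ sat (U.post x.1.2 p) M x.1.1)) ∧
          (∀ (x : (M.prodUpd U).S) (p : P), p ∉ Q →
            (∀ h : U.post x.1.2 p ≠ Form.atom p,
              (⟨x.1.2, ⟨p, h⟩⟩ : (e : U.E) × {p // U.post e p ≠ Form.atom p}) ∉ rest) →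
            (N'.V p (H' x) ↔ cur p x)) := by
  intro rest
  induction rest with
  | nil =>
    intro _ K H cur hb hR hr hq hcur
    exact ⟨K, H, rfl, hb, hR, fun x p h hm => absurd hm List.not_mem_nil,
      fun x p hp _ => hcur p hp x⟩
  | cons y₀ tl ih =>
    intro hrest K H cur hb hR hr hq hcur
    obtain ⟨e₀, d₀⟩ := y₀
    have hd₀Q : d₀.1 ∉ Q := hrest ⟨e₀, d₀⟩ List.mem_cons_self
    set ψ := Phi (A := A) (rA e₀) (qA e₀ d₀) d₀.1 with hψ
    set K₁ := K.prodUpd (assign d₀.1 ψ) with hK₁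
    set H₁ : (M.prodUpd U).S → K₁.S := fun x => jmap K d₀.1 ψ (H x) with hH₁
    set cur₁ : P → (M.prodUpd U).S → Prop := fun p x =>
      (p = d₀.1 ∧ ((e₀ = x.1.2 ∧ sat (U.post e₀ d₀.1) M x.1.1) ∨ (e₀ ≠ x.1.2 ∧ cur p x))) ∨
      (p ≠ d₀.1 ∧ cur p x) with hcur₁def
    have hb₁ : Function.Bijective H₁ := (jmap_bij K d₀.1 ψ).comp hb
    have hR₁ : ∀ a x y, (M.prodUpd U).R a x y ↔ K₁.R a (H₁ x) (H₁ y) :=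
      fun a x y => (hR a x y).trans (jmap_R K d₀.1 ψ a (H x) (H y))
    have hr₁ : ∀ e x, K₁.V (rA e) (H₁ x) ↔ e = x.1.2 := by
      intro e x
      have hne : rA e ≠ d₀.1 := fun he => hd₀Q (he ▸ hrQ e)
      exact (jmap_V_ne K d₀.1 ψ (rA e) hne (H x)).trans (hr e x)
    have hq₁ : ∀ e d x, K₁.V (qA e d) (H₁ x) ↔ sat (U.post e d.1) M x.1.1 := by
      intro e d x
      have hne : qA e d ≠ d₀.1 := fun he => hd₀Q (he ▸ hqQ e d)
      exact (jmap_V_ne K d₀.1 ψ (qA e d) hne (H x)).trans (hq e d x)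
    have hcur₁ : ∀ p, p ∉ Q → ∀ x, K₁.V p (H₁ x) ↔ cur₁ p x := by
      intro p hp x
      by_cases hpd : p = d₀.1
      · have h1 : K₁.V p (H₁ x) ↔ sat ψ K (H x) := by
          rw [hpd]; exact jmap_V_eq K d₀.1 ψ (H x)
        rw [h1, hψ, sat_Phi, hr e₀ x, hq e₀ d₀ x, hcur d₀.1 (hpd ▸ hp) x, hpd]
        by_cases he : e₀ = x.1.2 <;> simp [hcur₁def, he]
      · have h1 : K₁.V p (H₁ x) ↔ K.V p (H x) := jmap_V_ne K d₀.1 ψ p hpd (H x)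
        rw [h1, hcur p hp x]
        simp [hcur₁def, hpd]
    obtain ⟨N₂, H₂, hN₂, hb₂, hR₂, hT₂, hC₂⟩ :=
      ih (fun y hy => hrest y (List.mem_cons_of_mem _ hy)) K₁ H₁ cur₁ hb₁ hR₁ hr₁ hq₁ hcur₁
    refine ⟨N₂, H₂, by rw [hN₂]; rfl, hb₂, hR₂, ?_, ?_⟩
    · intro x p h hm
      rcases List.mem_cons.mp hm with hh | hh
      · obtain ⟨he, hd⟩ := Sigma.mk.inj_iff.mp hh
        subst he
        have hpd : p = d₀.1 := congrArg Subtype.val (eq_of_heq hd)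
        by_cases hm' : (⟨x.1.2, ⟨p, h⟩⟩ : (e : U.E) × {p // U.post e p ≠ Form.atom p}) ∈ tl
        · exact hT₂ x p h hm'
        · have h3 := hC₂ x p (fun hq' => hd₀Q (hpd ▸ hq')) (fun h' => hm')
          rw [h3, hpd]
          simp [hcur₁def]
      · exact hT₂ x p h hh
    · intro x p hp hnot
      have hnot' : ∀ h : U.post x.1.2 p ≠ Form.atom p,
          (⟨x.1.2, ⟨p, h⟩⟩ : (e : U.E) × {p // U.post e p ≠ Form.atom p}) ∉ tl :=
        fun h hm => hnot h (List.mem_cons_of_mem _ hm)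
      rw [hC₂ x p hp hnot']
      by_cases hpd : p = d₀.1
      · subst hpd
        have hef : e₀ ≠ x.1.2 := by
          intro he
          subst he
          exact hnot d₀.2 List.mem_cons_self
        simp [hcur₁def, hef]
      · simp [hcur₁def, hpd]
end Aux3
section Aux4
variable {A P : Type}

/-- The stored formula for phase 1: `⊥` for markers, `post e p` for domain atoms. -/
def Fstore (U : Upd A P) (x : (e : U.E) × Option {p // U.post e p ≠ Form.atom p}) :
    Form A P :=
  match x.2 with
  | none => Form.bot
  | some d => U.post x.1 d.1

theorem single_assignments_suffice' {A P : Type} [Finite A] [Countable P]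
    (M : Model A P) (hMne : Nonempty M.S)
    (U : Upd A P) [Fintype U.E] (hU : U.WF)
    (hdom : Nonempty (M.prodUpd U).S)
    (Q : Set P) (hQfresh : ∀ q ∈ Q, ¬ U.occursAtom q)
    (hQcard : Q.ncard = ∑ e : U.E, ({p | U.post e p ≠ Form.atom p}.ncard + 1)) :
    ∃ l : List (Upd A P),
      (∀ Ui ∈ l, Ui.WF ∧ ∀ g : Ui.E, {p | Ui.post g p ≠ Form.atom p}.Subsingleton) ∧
      Nonempty (prodUpds M l).S ∧
      ∃ h : (M.prodUpd U).S → (prodUpds M l).S,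
        Function.Bijective h ∧
        (∀ a x y, (M.prodUpd U).R a x y ↔ (prodUpds M l).R a (h x) (h y)) ∧
        (∀ p, p ∉ Q → ∀ x, ((M.prodUpd U).V p x ↔ (prodUpds M l).V p (h x))) := by
  classical
  obtain ⟨hEne, hEfin, hpreWF, hpostWF, hdomfin⟩ := hU
  haveI := hEne
  -- `Q` is finite
  have hQfin : Q.Finite := by
    by_contra hinf
    rw [Set.Infinite.ncard hinf] at hQcard
    have hpos : 0 < ∑ e : U.E, ({p | U.post e p ≠ Form.atom p}.ncard + 1) :=
      Finset.sum_pos (fun i _ => Nat.succ_pos _) Finset.univ_nonempty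
    omega
  haveI : Fintype Q := hQfin.fintype
  haveI instD : ∀ e : U.E, Fintype {p // U.post e p ≠ Form.atom p} :=
    fun e => (hdomfin e).fintype
  have hcards : Fintype.card ((e : U.E) × Option {p // U.post e p ≠ Form.atom p})
      = Fintype.card Q := by
    have h1 : ∀ e : U.E, Fintype.card {p // U.post e p ≠ Form.atom p}
        = {p | U.post e p ≠ Form.atom p}.ncard := by
      intro e
      rw [← Nat.card_eq_fintype_card, ← Nat.card_coe_set_eq]
      rfl
    have h2 : Fintype.card Q = Q.ncard := by
      rw [← Nat.card_eq_fintype_card, ← Nat.card_coe_set_eq]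
    rw [Fintype.card_sigma, h2, hQcard]
    exact Finset.sum_congr rfl fun e _ => by rw [Fintype.card_option, h1 e]
  let σ : ((e : U.E) × Option {p // U.post e p ≠ Form.atom p}) ≃ Q :=
    Fintype.equivOfCardEq hcards
  -- fresh atoms
  set rA : U.E → P := fun e => (σ ⟨e, none⟩).1 with hrAdef
  set qA : (e : U.E) → {p // U.post e p ≠ Form.atom p} → P :=
    fun e d => (σ ⟨e, some d⟩).1 with hqAdef
  have hrQ : ∀ e, rA e ∈ Q := fun e => (σ ⟨e, none⟩).2
  have hqQ : ∀ e d, qA e d ∈ Q := fun e d => (σ ⟨e, some d⟩).2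
  have hrAinj : Function.Injective rA := by
    intro a b h
    have h2 := σ.injective (Subtype.ext h)
    exact (Sigma.mk.inj_iff.mp h2).1
  have hrq_ne : ∀ e d f, qA e d ≠ rA f := by
    intro e d f h
    have h2 := σ.injective (Subtype.ext h)
    obtain ⟨he, hd⟩ := Sigma.mk.inj_iff.mp h2
    subst he
    exact Option.some_ne_none _ (eq_of_heq hd)
  have hdomQ : ∀ p ∈ Q, ∀ f, U.post f p = Form.atom p := by
    intro p hp f
    by_contra h
    exact hQfresh p hp (Or.inr (Or.inr ⟨f, h⟩))
  -- phase 1: the storage updates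
  set items₁ : List (P × Form A P) :=
    (Finset.univ : Finset ((e : U.E) × Option {p // U.post e p ≠ Form.atom p})).toList.map
      (fun x => ((σ x).1, Fstore U x)) with hitems
  have hQ1 : ∀ it ∈ items₁, it.1 ∈ Q := by
    intro it hit
    obtain ⟨x, _, rfl⟩ := List.mem_map.mp hit
    exact (σ x).2
  have hnd : (items₁.map Prod.fst).Nodup := by
    rw [hitems, List.map_map]
    exact (Finset.nodup_toList _).map
      (fun a b h => σ.injective (Subtype.ext h))
  have hfree : ∀ it ∈ items₁, ∀ q ∈ Q, ¬ occursIn q it.2 := by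
    intro it hit q hq hocc
    obtain ⟨x, _, rfl⟩ := List.mem_map.mp hit
    obtain ⟨e, d⟩ := x
    cases d with
    | none => simp [Fstore, occursIn] at hocc
    | some d => exact hQfresh q hq (Or.inr (Or.inl ⟨e, d.1, hocc⟩))
  obtain ⟨M₀, g₀, hM₀eq, g₀b, g₀R, c1, c2⟩ := chain Q items₁ M hQ1 hnd hfree
  have c2' : ∀ (x : (e : U.E) × Option {p // U.post e p ≠ Form.atom p}) (s : M.S),
      M₀.V (σ x).1 (g₀ s) ↔ sat (Fstore U x) M s := by
    intro x s
    exact (c2 ((σ x).1, Fstore U x)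
      (List.mem_map.mpr ⟨x, Finset.mem_toList.mpr (Finset.mem_univ x), rfl⟩) s)
  have cV : ∀ p, p ∉ Q → ∀ s, M.V p s ↔ M₀.V p (g₀ s) := by
    intro p hp s
    exact c1 p (fun it hit hpe => hp (by rw [hpe]; exact hQ1 it hit)) s
  -- phase 2: the big update with single marker assignments
  set U1 : Upd A P :=
    ⟨U.E, U.rel, U.pre, fun f p => if p = rA f then Form.top else Form.atom p⟩ with hU1
  have hpre0 : ∀ f s, sat (U.pre f) M s ↔ sat (U.pre f) M₀ (g₀ s) := by
    intro f s
    exact satiso (U.pre f) M M₀ g₀ g₀b g₀R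
      (fun p hp x => cV p (fun hpQ => hQfresh p hpQ (Or.inl ⟨f, hp⟩)) x) s
  set K := M₀.prodUpd U1 with hK
  set G : (M.prodUpd U).S → K.S :=
    fun x => ⟨(g₀ x.1.1, x.1.2), (hpre0 x.1.2 x.1.1).mp x.2⟩ with hG
  have Gb : Function.Bijective G := by
    constructor
    · intro x y hxy
      have h1 : (g₀ x.1.1, x.1.2) = (g₀ y.1.1, y.1.2) := congrArg Subtype.val hxy
      injection h1 with h2 h3
      exact Subtype.ext (Prod.ext (g₀b.1 h2) h3)
    · rintro ⟨⟨u, f⟩, hu⟩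
      obtain ⟨s, rfl⟩ := g₀b.2 u
      exact ⟨⟨(s, f), (hpre0 f s).mpr hu⟩, rfl⟩
  have GR : ∀ a x y, (M.prodUpd U).R a x y ↔ K.R a (G x) (G y) := by
    intro a x y
    exact and_congr (g₀R a x.1.1 y.1.1) Iff.rfl
  have hr : ∀ e (x : (M.prodUpd U).S), K.V (rA e) (G x) ↔ e = x.1.2 := by
    intro e x
    show sat (if rA e = rA x.1.2 then Form.top else Form.atom (rA e)) M₀ (g₀ x.1.1) ↔ _
    by_cases he : e = x.1.2
    · rw [if_pos (by rw [he])]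
      simpa [sat] using he
    · rw [if_neg (fun hh => he (hrAinj hh))]
      constructor
      · intro hvv
        exact absurd ((c2' ⟨e, none⟩ x.1.1).mp hvv) (by simp [Fstore, sat])
      · intro h
        exact absurd h he
  have hq : ∀ e d (x : (M.prodUpd U).S),
      K.V (qA e d) (G x) ↔ sat (U.post e d.1) M x.1.1 := by
    intro e d x
    show sat (if qA e d = rA x.1.2 then Form.top else Form.atom (qA e d)) M₀ (g₀ x.1.1) ↔ _
    rw [if_neg (hrq_ne e d x.1.2)]
    exact c2' ⟨e, some d⟩ x.1.1
  have hcurK : ∀ p, p ∉ Q → ∀ x : (M.prodUpd U).S, K.V p (G x) ↔ M.V p x.1.1 := by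
    intro p hp x
    show sat (if p = rA x.1.2 then Form.top else Form.atom p) M₀ (g₀ x.1.1) ↔ _
    rw [if_neg (fun hh => hp (by rw [hh]; exact hrQ x.1.2))]
    exact (cV p hp x.1.1).symm
  -- phase 3
  set pairsL :=
    (Finset.univ : Finset ((e : U.E) × {p // U.post e p ≠ Form.atom p})).toList with hpairs
  have hrestQ : ∀ y ∈ pairsL, y.2.1 ∉ Q := fun y _ hy => y.2.2 (hdomQ y.2.1 hy y.1)
  obtain ⟨N', H', hN'eq, hb', hR', hT', hC'⟩ :=
    phase3 M U Q rA qA hrQ hqQ pairsL hrestQ K G (fun p x => M.V p x.1.1)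
      Gb GR hr hq hcurK
  -- assembly
  refine ⟨(items₁.map fun it => assign it.1 it.2) ++
      (U1 :: pairsL.map fun y => assign y.2.1 (Phi (rA y.1) (qA y.1 y.2) y.2.1)),
    ?_, ?_⟩
  · intro Ui hUi
    rcases List.mem_append.mp hUi with h | h
    · obtain ⟨it, hit, rfl⟩ := List.mem_map.mp h
      obtain ⟨x, _, rfl⟩ := List.mem_map.mp hit
      refine ⟨assign_WF _ _ ?_, fun g => assign_single _ _ g⟩
      obtain ⟨e, d⟩ := x
      cases d with
      | none => exact trivial
      | some d => exact hpostWF e d.1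
    · rcases List.mem_cons.mp h with h | h
      · subst h
        have key : ∀ (g : U.E) (c : P), c ∈ {p | U1.post g p ≠ Form.atom p} → c = rA g := by
          intro g c hc
          by_contra hh
          apply hc
          show (if c = rA g then Form.top else Form.atom c) = Form.atom c
          rw [if_neg hh]
        refine ⟨⟨hEne, hEfin, hpreWF, ?_, ?_⟩, ?_⟩
        · intro f p
          show (if p = rA f then Form.top else Form.atom p).WF
          by_cases hh : p = rA f <;> simp [hh, Form.WF]
        · intro f
          apply Set.Finite.subset (Set.finite_singleton (rA f))
          intro p hp
          exact key f p hp
        · intro g a ha b hb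
          rw [key g a ha, key g b hb]
      · obtain ⟨y, _, rfl⟩ := List.mem_map.mp h
        exact ⟨assign_WF _ _ (Phi_WF _ _ _), fun g => assign_single _ _ g⟩
  · have hNl : prodUpds M ((items₁.map fun it => assign it.1 it.2) ++
        (U1 :: pairsL.map fun y => assign y.2.1 (Phi (rA y.1) (qA y.1 y.2) y.2.1)))
        = N' := by
      rw [hN'eq, hK, hM₀eq, prodUpds_append, prodUpds_cons]
    rw [hNl]
    refine ⟨Nonempty.map H' hdom, H', hb', hR', ?_⟩
    intro p hp x
    show sat (U.post x.1.2 p) M x.1.1 ↔ _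
    by_cases hpd : U.post x.1.2 p = Form.atom p
    · rw [hpd]
      exact (hC' x p hp (fun h => absurd hpd h)).symm
    · exact (hT' x p hpd (Finset.mem_toList.mpr (Finset.mem_univ _))).symm

end Aux4

/-- given an update model `U`, an epistemic model `M` with `M ⊗ U`
nonempty, and a set `Q` of atoms not occurring in `U`, of cardinality
`Σ_{e ∈ E} (|dom(post(e))| + 1)`, there is a finite sequence `U₁, …, U_m` of update
models, each of whose events assigns at most one atom, such that the iterated
product `N = (…(M ⊗ U₁) ⊗ …) ⊗ U_m` has nonempty domain and there is a bijection
from the domain of `M ⊗ U` onto the domain of `N` preserving and reflecting each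
accessibility relation and the valuation of every atom `p ∈ P \ Q`. -/
theorem single_assignments_suffice {A P : Type} [Finite A] [Countable P]
    (M : Model A P) (hMne : Nonempty M.S)
    (U : Upd A P) [Fintype U.E] (hU : U.WF)
    (hdom : Nonempty (M.prodUpd U).S)
    (Q : Set P) (hQfresh : ∀ q ∈ Q, ¬ U.occursAtom q)
    (hQcard : Q.ncard = ∑ e : U.E, ({p | U.post e p ≠ Form.atom p}.ncard + 1)) :
    ∃ l : List (Upd A P),
      (∀ Ui ∈ l, Ui.WF ∧ ∀ g : Ui.E, {p | Ui.post g p ≠ Form.atom p}.Subsingleton) ∧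
      Nonempty (prodUpds M l).S ∧
      ∃ h : (M.prodUpd U).S → (prodUpds M l).S,
        Function.Bijective h ∧
        (∀ a x y, (M.prodUpd U).R a x y ↔ (prodUpds M l).R a (h x) (h y)) ∧
        (∀ p, p ∉ Q → ∀ x, ((M.prodUpd U).V p x ↔ (prodUpds M l).V p (h x))) := by
  exact single_assignments_suffice' M hMne U hU hdom Q hQfresh hQcard
end

section
/- Let p ∈ P and let M be the epistemic model with states S = {1, 0}, R(a) = S × S for every agent a ∈ A, V(p) = {1}, and V(q) = ∅ for every atom q ≠ p. Then there is no finite sequence (U₁,e₁), …, (U_n,e_n) of updates, each of which is a public announcement (a single event with universal access, arbitrary precondition and identity postcondition) or a public assignment whose postconditions on their domain are all ⊤ or ⊥ (a single event with universal access and precondition ⊤), such that the sequential execution at (M,1) is defined (at each step the precondition holds at the current point) and the resulting epistemic state is bisimilar to (M,0). -/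
/-- Sequential execution of a list of updates in a pointed epistemic model: at each
step the precondition of the actual event must hold at the current point. -/
inductive Exec {A P : Type} :
    ((N : Model A P) × N.S) → List ((U : Upd A P) × U.E) → ((N : Model A P) × N.S) → Prop where
  | nil (x : (N : Model A P) × N.S) : Exec x [] x
  | cons (N : Model A P) (s : N.S) (U : Upd A P) (e : U.E)
      (rest : List ((U : Upd A P) × U.E)) (y : (N : Model A P) × N.S)
      (h : sat (U.pre e) N s)
      (hrec : Exec ⟨N.prodUpd U, ⟨(s, e), h⟩⟩ rest y) :
      Exec ⟨N, s⟩ (⟨U, e⟩ :: rest) y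

/-- `(U,e)` is a public announcement: a single event with universal access,
arbitrary precondition and identity postcondition. -/
def IsPublicAnnouncement {A P : Type} (U : Upd A P) (e : U.E) : Prop :=
  (∀ f : U.E, f = e) ∧ (∀ a, U.rel a e e) ∧ (∀ q, U.post e q = Form.atom q)

/-- `(U,e)` is a public assignment with postconditions `⊤`/`⊥` only: a single event
with universal access and precondition `⊤`, whose postconditions on their domain
are all `⊤` or `⊥`. -/
def IsTFPublicAssignment {A P : Type} (U : Upd A P) (e : U.E) : Prop :=
  (∀ f : U.E, f = e) ∧ (∀ a, U.rel a e e) ∧ U.pre e = Form.top ∧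
  (∀ q, U.post e q = Form.atom q ∨ U.post e q = Form.top ∨ U.post e q = Form.bot)



def PInv {A P : Type} (p : P) (x : (N : Model A P) × N.S) : Prop :=
  x.1.V p x.2 ∨ ∀ t, ¬ x.1.V p t

lemma exec_inv {A P : Type} (p : P) (l : List ((U : Upd A P) × U.E))
    (x y : (N : Model A P) × N.S) (hex : Exec x l y)
    (hl : ∀ u ∈ l, IsPublicAnnouncement u.1 u.2 ∨ IsTFPublicAssignment u.1 u.2)
    (hx : PInv p x) : PInv p y := by
  induction hex with
  | nil => exact hx
  | cons N s U e rest y h hrec ih =>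
    apply ih
    · intro u hu; exact hl u (List.mem_cons_of_mem _ hu)
    · have key : ∀ q : P, U.post e q = Form.atom q ∨ U.post e q = Form.top ∨
          U.post e q = Form.bot := by
        rcases hl ⟨U, e⟩ List.mem_cons_self with hpa | htf
        · intro q; exact Or.inl (hpa.2.2 q)
        · exact htf.2.2.2
      have hall : ∀ f : U.E, f = e := by
        rcases hl ⟨U, e⟩ List.mem_cons_self with hpa | htf
        · exact hpa.1
        · exact htf.1
      rcases key p with hq | hq | hq
      · rcases hx with h1 | h2
        · left; show sat (U.post e p) N s; rw [hq]; exact h1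
        · right; rintro ⟨⟨t, f⟩, hf⟩
          show ¬ sat (U.post f p) N t; rw [hall f, hq]; exact h2 t
      · left; show sat (U.post e p) N s; rw [hq]; trivial
      · right; rintro ⟨⟨t, f⟩, hf⟩
        show ¬ sat (U.post f p) N t; rw [hall f, hq]; exact id

/-- with `M` the two-state model where both agents are uncertain about
`p` (states `1 = true` and `0 = false`, universal access, `V(p) = {1}`, all other
atoms false everywhere), there is no finite sequence of public announcements and
public assignments-to-`⊤`/`⊥` whose sequential execution at `(M,1)` is defined and
results in an epistemic state bisimilar to `(M,0)`. -/
theorem no_tf_public_transformation {A P : Type} [Finite A] [Nonempty A] [Countable P]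
    (p : P) :
    ¬ ∃ (l : List ((U : Upd A P) × U.E)) (y : (N : Model A P) × N.S),
        (∀ u ∈ l, u.1.WF ∧ (IsPublicAnnouncement u.1 u.2 ∨ IsTFPublicAssignment u.1 u.2)) ∧
        Exec ⟨⟨Bool, fun _ _ _ => True, fun q s => q = p ∧ s = true⟩, true⟩ l y ∧
        Bisimilar y.1 ⟨Bool, fun _ _ _ => True, fun q s => q = p ∧ s = true⟩ y.2 false := by
  rintro ⟨l, y, hl, hex, Z, hbisim, hZ⟩
  have hinv : PInv p y := by
    refine exec_inv p l _ y hex (fun u hu => (hl u hu).2) ?_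
    left; exact ⟨rfl, rfl⟩
  obtain ⟨hatoms, _, hback⟩ := hbisim.2 y.2 false hZ
  have hps : ¬ y.1.V p y.2 := by
    intro hp
    have := (hatoms p).mp hp
    exact Bool.noConfusion this.2
  have hne : ∀ t, ¬ y.1.V p t := by
    rcases hinv with h1 | h2
    · exact absurd h1 hps
    · exact h2
  obtain ⟨t, hRt, hZt⟩ := hback (Classical.arbitrary A) true trivial
  obtain ⟨hatoms', _, _⟩ := hbisim.2 t true hZt
  exact hne t ((hatoms' p).mpr ⟨rfl, rfl⟩)
end

section
/- Bisimilar epistemic states cannot be distinguished in the language L: if (M,s) ↔ (M',s'), then for every formula φ ∈ L (including formulas containing common-knowledge modalities [B*] and update modalities [U,e]): (M,s) ⊨ φ if and only if (M',s') ⊨ φ. -/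
/-- Lifting a "forth"-style property through reflexive-transitive closure. -/
lemma rtg_lift {α β : Type*} {R : α → α → Prop} {R' : β → β → Prop}
    {Z : α → β → Prop}
    (h : ∀ x y, Z x y → ∀ t, R x t → ∃ t', R' y t' ∧ Z t t')
    {x : α} {y : β} (hxy : Z x y) {t : α}
    (ht : Relation.ReflTransGen R x t) :
    ∃ t', Relation.ReflTransGen R' y t' ∧ Z t t' := by
  induction ht with
  | refl => exact ⟨y, Relation.ReflTransGen.refl, hxy⟩
  | tail _ hstep ih =>
      obtain ⟨u', hu', hZu⟩ := ih
      obtain ⟨t', ht', hZt⟩ := h _ _ hZu _ hstep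
      exact ⟨t', hu'.tail ht', hZt⟩

/-- Core invariance lemma: pointwise bisimulation clauses imply logical
equivalence, for all models and all linked pairs of states. -/
lemma bisim_inv {A P : Type} (φ : Form A P) :
    ∀ (M M' : Model A P) (Z : M.S → M'.S → Prop),
      (∀ s s', Z s s' →
        (∀ p, M.V p s ↔ M'.V p s') ∧
        (∀ a t, M.R a s t → ∃ t', M'.R a s' t' ∧ Z t t') ∧
        (∀ a t', M'.R a s' t' → ∃ t, M.R a s t ∧ Z t t')) →
      ∀ s s', Z s s' → (sat φ M s ↔ sat φ M' s') := by
  induction φ with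
  | atom p =>
      intro M M' Z hZ s s' hss'
      exact (hZ s s' hss').1 p
  | top => intro _ _ _ _ _ _ _; simp [sat]
  | bot => intro _ _ _ _ _ _ _; simp [sat]
  | neg φ ih =>
      intro M M' Z hZ s s' hss'
      simpa [sat] using not_congr (ih M M' Z hZ s s' hss')
  | and φ ψ ihφ ihψ =>
      intro M M' Z hZ s s' hss'
      simpa [sat] using and_congr (ihφ M M' Z hZ s s' hss') (ihψ M M' Z hZ s s' hss')
  | box a φ ih =>
      intro M M' Z hZ s s' hss'
      constructor
      · intro H t' ht'
        obtain ⟨t, ht, hZt⟩ := (hZ s s' hss').2.2 a t' ht'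
        exact (ih M M' Z hZ t t' hZt).mp (H t ht)
      · intro H t ht
        obtain ⟨t', ht', hZt⟩ := (hZ s s' hss').2.1 a t ht
        exact (ih M M' Z hZ t t' hZt).mpr (H t' ht')
  | cbox B φ ih =>
      intro M M' Z hZ s s' hss'
      have forth : ∀ x y, Z x y → ∀ t, (∃ a ∈ B, M.R a x t) →
          ∃ t', (∃ a ∈ B, M'.R a y t') ∧ Z t t' := by
        intro x y hxy t ⟨a, haB, har⟩
        obtain ⟨t', ht', hZt⟩ := (hZ x y hxy).2.1 a t har
        exact ⟨t', ⟨a, haB, ht'⟩, hZt⟩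
      have back : ∀ y x, (Function.swap Z) y x → ∀ t', (∃ a ∈ B, M'.R a y t') →
          ∃ t, (∃ a ∈ B, M.R a x t) ∧ (Function.swap Z) t' t := by
        intro y x hxy t' ⟨a, haB, har⟩
        obtain ⟨t, ht, hZt⟩ := (hZ x y hxy).2.2 a t' har
        exact ⟨t, ⟨a, haB, ht⟩, hZt⟩
      constructor
      · intro H t' ht'
        obtain ⟨t, ht, hZt⟩ := rtg_lift back hss' ht'
        exact (ih M M' Z hZ t t' hZt).mp (H t ht)
      · intro H t ht
        obtain ⟨t', ht', hZt⟩ := rtg_lift forth hss' ht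
        exact (ih M M' Z hZ t t' hZt).mpr (H t' ht')
  | upd E rel pre post e φ ihpre ihpost ihφ =>
      intro M M' Z hZ s s' hss'
      set N := prodM M E rel (fun f t => sat (pre f) M t) (fun f t p => sat (post f p) M t)
        with hN
      set N' := prodM M' E rel (fun f t => sat (pre f) M' t) (fun f t p => sat (post f p) M' t)
        with hN'
      let Z' : N.S → N'.S → Prop := fun x y => Z x.1.1 y.1.1 ∧ x.1.2 = y.1.2
      have hZ' : ∀ x y, Z' x y →
          (∀ p, N.V p x ↔ N'.V p y) ∧
          (∀ a t, N.R a x t → ∃ t', N'.R a y t' ∧ Z' t t') ∧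
          (∀ a t', N'.R a y t' → ∃ t, N.R a x t ∧ Z' t t') := by
        rintro ⟨⟨x1, f⟩, hx⟩ ⟨⟨y1, g⟩, hy⟩ ⟨hZxy, hfg⟩
        dsimp at hfg; subst hfg
        refine ⟨fun p => ihpost f p M M' Z hZ x1 y1 hZxy, ?_, ?_⟩
        · rintro a ⟨⟨t1, f'⟩, htpre⟩ ⟨hR, hrel⟩
          obtain ⟨t', ht', hZt⟩ := (hZ x1 y1 hZxy).2.1 a t1 hR
          exact ⟨⟨(t', f'), (ihpre f' M M' Z hZ t1 t' hZt).mp htpre⟩,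
            ⟨ht', hrel⟩, ⟨hZt, rfl⟩⟩
        · rintro a ⟨⟨t1', f'⟩, htpre⟩ ⟨hR, hrel⟩
          obtain ⟨t, ht, hZt⟩ := (hZ x1 y1 hZxy).2.2 a t1' hR
          exact ⟨⟨(t, f'), (ihpre f' M M' Z hZ t t1' hZt).mpr htpre⟩,
            ⟨ht, hrel⟩, ⟨hZt, rfl⟩⟩
      have hpe : sat (pre e) M s ↔ sat (pre e) M' s' := ihpre e M M' Z hZ s s' hss'
      show (∀ h : sat (pre e) M s, sat φ N ⟨(s, e), h⟩) ↔
        (∀ h : sat (pre e) M' s', sat φ N' ⟨(s', e), h⟩)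
      constructor
      · intro H h'
        exact (ihφ N N' Z' hZ' ⟨(s, e), hpe.mpr h'⟩ ⟨(s', e), h'⟩ ⟨hss', rfl⟩).mp
          (H (hpe.mpr h'))
      · intro H h
        exact (ihφ N N' Z' hZ' ⟨(s, e), h⟩ ⟨(s', e), hpe.mp h⟩ ⟨hss', rfl⟩).mpr
          (H (hpe.mp h))

/-- bisimilar epistemic states cannot be distinguished in the
language `L`: if `(M,s) ↔ (M',s')`, then for every formula `φ ∈ L` (including
formulas containing common-knowledge and update modalities):
`(M,s) ⊨ φ` if and only if `(M',s') ⊨ φ`. -/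
theorem bisimulation_invariance {A P : Type} [Finite A] [Countable P]
    (M M' : Model A P) (hMne : Nonempty M.S) (hM'ne : Nonempty M'.S)
    (s : M.S) (s' : M'.S) (hbis : Bisimilar M M' s s')
    (φ : Form A P) (hφ : φ.WF) :
    sat φ M s ↔ sat φ M' s' := by
  obtain ⟨Z, ⟨-, hZ⟩, hss'⟩ := hbis
  exact bisim_inv φ M M' Z hZ s s' hss'
end
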